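/- arXiv:1203.1809 — 9 statements merged into one kernel-verified Lean document; each statement's English description precedes it below -/
import Mathlib

section
/- Let (f,t) be a payment-based mechanism such that for every agent i and every type vector θ_{-i} of the other agents, the infimum S_i(θ_{-i}) := inf_{θ'_i ∈ Θ_i} T(θ'_i, θ_{-i}) exists in ℝ (the set {T(θ'_i,θ_{-i}) : θ'_i ∈ Θ_i} is nonempty and bounded below). Then the payment-based mechanism (f, t^{BCGC}) defined by t_i^{BCGC}(θ) := t_i(θ) − S_i(θ_{-i})/n is non-deficit. -/
/-!
STATEMENT 0: For a payment-based mechanism (f,t) (n ≥ 2 agents, finite nonempty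
decision set D, nonempty type sets Θ i, valuations v), if for every agent i and
every profile θ the set {T(θ'_i, θ_{-i}) : θ'_i ∈ Θ i} has a greatest lower
bound S i θ in ℝ (it is nonempty and bounded below), then the mechanism with
payments t_i^{BCGC}(θ) := t_i(θ) − S_i(θ_{-i})/n is non-deficit.
Here (θ'_i, θ_{-i}) is `Function.update θ i θ'_i`, and T(θ) = Σ_i t_i(θ).
-/
theorem stmt_0 {n : ℕ} (hn : 2 ≤ n) {D : Type} [Fintype D] [Nonempty D]
    {Θ : Fin n → Type} [∀ i, Nonempty (Θ i)]
    (v : ∀ i : Fin n, D → Θ i → ℝ)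
    (f : (∀ i, Θ i) → D)
    (t : Fin n → (∀ i, Θ i) → ℝ)
    (T : (∀ i, Θ i) → ℝ) (hT : ∀ θ, T θ = ∑ i, t i θ)
    (S : Fin n → (∀ i, Θ i) → ℝ)
    (hS : ∀ (i : Fin n) (θ : ∀ j, Θ j),
      IsGLB {y : ℝ | ∃ x : Θ i, y = T (Function.update θ i x)} (S i θ)) :
    ∀ θ : ∀ j, Θ j, 0 ≤ ∑ i, (t i θ - S i θ / n) := by
  intro θ
  have hnpos : (0:ℝ) < n := by positivity
  have hle : ∀ i : Fin n, S i θ ≤ T θ := by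
    intro i
    have hmem : T θ ∈ {y : ℝ | ∃ x : Θ i, y = T (Function.update θ i x)} :=
      ⟨θ i, by rw [Function.update_eq_self]⟩
    exact (hS i θ).1 hmem
  have hsum : ∑ i, S i θ ≤ ∑ _i : Fin n, T θ := Finset.sum_le_sum fun i _ => hle i
  rw [Finset.sum_const, Finset.card_univ, Fintype.card_fin, nsmul_eq_mul] at hsum
  have : ∑ i, (t i θ - S i θ / n) = T θ - (∑ i, S i θ) / n := by
    rw [Finset.sum_sub_distrib, ← hT, Finset.sum_div]
  rw [this, sub_nonneg, div_le_iff₀ hnpos]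
  linarith
end

section
/- Assume all type sets equal a common set Θ_0 and that the total VCG payment VCG(θ) = Σ_i VCG_i(θ) is permutation independent. Let r = (r_1,…,r_n) be a Groves mechanism and define r'(x) := (1/n!) · Σ_{j=1}^n Σ_{π ∈ Π(n−1)} r_j(x^π) for x ∈ Θ_0^{n−1}, where Π(n−1) is the set of permutations of {1,…,n−1} and (x^π)_i = x_{π^{-1}(i)}. If r is non-deficit, then the anonymous Groves mechanism determined by r' is non-deficit. -/
/-!
STATEMENT 2: Symmetric type sets (common Θ), n+1 ≥ 2 agents, finite nonempty
decision set D, efficient decision function f, VCG payments; assume the total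
VCG payment is permutation independent. Given a Groves mechanism with
redistribution functions r = (r_1,…,r_{n+1}) (agent i receives r i (θ_{-i})),
define r'(x) := (1/(n+1)!) Σ_j Σ_{π ∈ Π(n)} r_j(x^π), where (x^π)_i = x_{π⁻¹ i}.
If r is non-deficit then the anonymous Groves mechanism determined by r'
(r' is permutation independent) is non-deficit.
θ_{-i} is encoded as θ ∘ i.succAbove.
-/

noncomputable def VCGi {N : ℕ} {D : Type} [Fintype D] [Nonempty D]
    {Θ : Type} (v : Fin N → D → Θ → ℝ) (f : (Fin N → Θ) → D)
    (i : Fin N) (θ : Fin N → Θ) : ℝ :=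
  (Finset.univ.sup' Finset.univ_nonempty fun d =>
      ∑ j ∈ Finset.univ.erase i, v j d (θ j)) -
    ∑ j ∈ Finset.univ.erase i, v j (f θ) (θ j)

noncomputable def VCGtot {N : ℕ} {D : Type} [Fintype D] [Nonempty D]
    {Θ : Type} (v : Fin N → D → Θ → ℝ) (f : (Fin N → Θ) → D)
    (θ : Fin N → Θ) : ℝ :=
  ∑ i, VCGi v f i θ

section aux

/-- For fixed `j`, the permutation of `Fin (n+1)` sending `j ↦ i` and
`j.succAbove k ↦ i.succAbove (σ⁻¹ k)`. -/
def grovesPerm {n : ℕ} (j : Fin (n+1)) (p : Fin (n+1) × Equiv.Perm (Fin n)) :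
    Equiv.Perm (Fin (n+1)) :=
  (finSuccEquiv' j).trans ((Equiv.optionCongr p.2⁻¹).trans (finSuccEquiv' p.1).symm)

lemma grovesPerm_succAbove {n : ℕ} (j : Fin (n+1)) (p : Fin (n+1) × Equiv.Perm (Fin n))
    (k : Fin n) : grovesPerm j p (j.succAbove k) = p.1.succAbove (p.2⁻¹ k) := by
  simp [grovesPerm, finSuccEquiv'_succAbove, finSuccEquiv'_symm_some]

lemma grovesPerm_self {n : ℕ} (j : Fin (n+1)) (p : Fin (n+1) × Equiv.Perm (Fin n)) :
    grovesPerm j p j = p.1 := by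
  simp [grovesPerm]

lemma grovesPerm_bijective {n : ℕ} (j : Fin (n+1)) :
    Function.Bijective (grovesPerm j) := by
  rw [Fintype.bijective_iff_injective_and_card]
  refine ⟨?_, by simp [Fintype.card_perm, Nat.factorial_succ, mul_comm]⟩
  rintro ⟨i, σ⟩ ⟨i', σ'⟩ h
  have hi : i = i' := by
    have := congrArg (fun e : Equiv.Perm (Fin (n+1)) => e j) h
    simpa [grovesPerm_self] using this
  subst hi
  have hσ : σ⁻¹ = σ'⁻¹ := by
    refine Equiv.ext fun k => ?_
    have := congrArg (fun e : Equiv.Perm (Fin (n+1)) => e (j.succAbove k)) h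
    simp only [grovesPerm_succAbove] at this
    exact Fin.succAbove_right_injective this
  simp [inv_injective hσ]

end aux

theorem stmt_2 {n : ℕ} (hn : 1 ≤ n) {D : Type} [Fintype D] [Nonempty D]
    {Θ : Type} [Nonempty Θ]
    (v : Fin (n+1) → D → Θ → ℝ) (f : (Fin (n+1) → Θ) → D)
    (hf : ∀ (θ : Fin (n+1) → Θ) (d : D),
      ∑ i, v i d (θ i) ≤ ∑ i, v i (f θ) (θ i))
    (hVCGperm : ∀ (θ : Fin (n+1) → Θ) (σ : Equiv.Perm (Fin (n+1))),
      VCGtot v f (fun i => θ (σ⁻¹ i)) = VCGtot v f θ)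
    (r : Fin (n+1) → (Fin n → Θ) → ℝ)
    (hr : ∀ θ : Fin (n+1) → Θ, ∑ i : Fin (n+1), r i (θ ∘ i.succAbove) ≤ VCGtot v f θ)
    (r' : (Fin n → Θ) → ℝ)
    (hr' : ∀ x : Fin n → Θ, r' x =
      (1 / (Nat.factorial (n+1) : ℝ)) *
        ∑ j, ∑ σ : Equiv.Perm (Fin n), r j (fun i => x (σ⁻¹ i))) :
    (∀ (x : Fin n → Θ) (σ : Equiv.Perm (Fin n)), r' (fun i => x (σ⁻¹ i)) = r' x) ∧
    (∀ θ : Fin (n+1) → Θ, ∑ i : Fin (n+1), r' (θ ∘ i.succAbove) ≤ VCGtot v f θ) := by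
  constructor
  · intro x σ
    rw [hr', hr']
    congr 1
    refine Finset.sum_congr rfl fun j _ => ?_
    refine Fintype.sum_bijective (fun π => π * σ) (Group.mulRight_bijective σ)
      (fun π => r j fun i => x (σ⁻¹ (π⁻¹ i))) (fun π => r j fun i => x (π⁻¹ i)) fun π => ?_
    have : (fun i => x (σ⁻¹ (π⁻¹ i))) = fun i => x ((π * σ)⁻¹ i) := by
      funext i; simp [mul_inv_rev]
    simp only [this]
  · intro θ
    have hfac : (0 : ℝ) < (Nat.factorial (n+1) : ℝ) := by
      exact_mod_cast Nat.factorial_pos (n+1)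
    have key : ∀ j : Fin (n+1),
        ∑ p : Fin (n+1) × Equiv.Perm (Fin n),
          r j (fun k => θ (p.1.succAbove (p.2⁻¹ k)))
        = ∑ τ : Equiv.Perm (Fin (n+1)), r j (fun k => θ (τ (j.succAbove k))) := by
      intro j
      refine Fintype.sum_bijective (grovesPerm j) (grovesPerm_bijective j) _ _ fun p => ?_
      congr 1
      funext k
      rw [grovesPerm_succAbove]
    calc ∑ i : Fin (n+1), r' (θ ∘ i.succAbove)
        = (1 / (Nat.factorial (n+1) : ℝ)) *
            ∑ τ : Equiv.Perm (Fin (n+1)), ∑ j, r j ((θ ∘ τ) ∘ j.succAbove) := by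
          simp only [hr', ← Finset.mul_sum]
          congr 1
          rw [Finset.sum_comm, Finset.sum_comm (γ := Equiv.Perm (Fin (n+1)))]
          refine Finset.sum_congr rfl fun j _ => ?_
          exact ((Fintype.sum_prod_type
            (f := fun p : Fin (n+1) × Equiv.Perm (Fin n) =>
              r j fun k => θ (p.1.succAbove (p.2⁻¹ k)))).symm.trans (key j))
      _ ≤ (1 / (Nat.factorial (n+1) : ℝ)) *
            ∑ _τ : Equiv.Perm (Fin (n+1)), VCGtot v f θ := by
          refine mul_le_mul_of_nonneg_left ?_ (by positivity)
          refine Finset.sum_le_sum fun τ _ => ?_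
          have h1 := hr (θ ∘ τ)
          have h2 := hVCGperm θ τ⁻¹
          simp only [inv_inv] at h2
          exact h1.trans (le_of_eq h2)
      _ = VCGtot v f θ := by
          rw [Finset.sum_const, Finset.card_univ, Fintype.card_perm, Fintype.card_fin]
          field_simp
          exact nsmul_eq_mul _ _
end

section
/- Assume all type sets equal a common set Θ_0 and that the total VCG payment VCG(θ) = Σ_i VCG_i(θ) is permutation independent. Let r = (r_1,…,r_n) be a Groves mechanism and define the anonymous Groves mechanism r'(x) := (1/n!) · Σ_{j=1}^n Σ_{π ∈ Π(n−1)} r_j(x^π). If an anonymous Groves mechanism r^0 is collectively dominated by r, then r^0 is collectively dominated by r'. -/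
open Finset Equiv

private lemma exists_perm_comp {n : ℕ} (ι₁ ι₂ : Fin n → Fin (n+1))
    (h₁ : Function.Injective ι₁) (h₂ : Function.Injective ι₂) :
    ∃ ρ : Equiv.Perm (Fin (n+1)), ∀ k, ρ (ι₁ k) = ι₂ k := by
  classical
  let e₁ : Fin n ≃ {x // x ∈ Set.range ι₁} := Equiv.ofInjective ι₁ h₁
  let e₂ : Fin n ≃ {x // x ∈ Set.range ι₂} := Equiv.ofInjective ι₂ h₂
  let e : {x // x ∈ Set.range ι₁} ≃ {x // x ∈ Set.range ι₂} := e₁.symm.trans e₂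
  refine ⟨e.extendSubtype, fun k => ?_⟩
  have hm : ι₁ k ∈ Set.range ι₁ := ⟨k, rfl⟩
  rw [Equiv.extendSubtype_apply_of_mem e (ι₁ k) hm]
  have h : e₁.symm ⟨ι₁ k, hm⟩ = k := e₁.injective (by simp [e₁])
  show ((e₁.symm.trans e₂) ⟨ι₁ k, hm⟩ : Fin (n+1)) = ι₂ k
  simp [h, e₂, Equiv.ofInjective]

private lemma sum_perm_comp_eq {n : ℕ} {Θ : Type} (g : (Fin n → Θ) → ℝ)
    (θ : Fin (n+1) → Θ) (ι₁ ι₂ : Fin n → Fin (n+1))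
    (h₁ : Function.Injective ι₁) (h₂ : Function.Injective ι₂) :
    ∑ τ : Equiv.Perm (Fin (n+1)), g (θ ∘ τ ∘ ι₁)
      = ∑ τ : Equiv.Perm (Fin (n+1)), g (θ ∘ τ ∘ ι₂) := by
  obtain ⟨ρ, hρ⟩ := exists_perm_comp ι₁ ι₂ h₁ h₂
  refine (Fintype.sum_equiv (Equiv.mulRight ρ)
    (fun τ => g (θ ∘ τ ∘ ι₂)) (fun τ => g (θ ∘ τ ∘ ι₁)) fun τ => ?_).symm
  show g (θ ∘ τ ∘ ι₂) = g (θ ∘ (τ * ρ) ∘ ι₁)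
  congr 1
  funext k
  simp [Equiv.Perm.mul_apply, hρ k]

private lemma sum_prod_eq {n : ℕ} {Θ : Type} (g : (Fin n → Θ) → ℝ) (θ : Fin (n+1) → Θ) :
    ∑ i : Fin (n+1), ∑ σ : Equiv.Perm (Fin n), g (θ ∘ i.succAbove ∘ σ)
      = ∑ τ : Equiv.Perm (Fin (n+1)), g (θ ∘ τ ∘ Fin.succ) := by
  classical
  let Φ : Fin (n+1) × Equiv.Perm (Fin n) → Equiv.Perm (Fin (n+1)) := fun p =>
    (finSuccEquiv' 0).trans ((Equiv.optionCongr p.2).trans (finSuccEquiv' p.1).symm)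
  have hΦsucc : ∀ p k, Φ p (Fin.succ k) = p.1.succAbove (p.2 k) := by
    intro p k
    show (finSuccEquiv' p.1).symm (Equiv.optionCongr p.2 (finSuccEquiv' 0 (Fin.succ k)))
        = p.1.succAbove (p.2 k)
    rw [← Fin.zero_succAbove k, finSuccEquiv'_succAbove]
    simp
  have hΦ0 : ∀ p, Φ p 0 = p.1 := by
    intro p
    show (finSuccEquiv' p.1).symm (Equiv.optionCongr p.2 (finSuccEquiv' 0 0)) = p.1
    rw [finSuccEquiv'_at]
    simp
  have hinj : Function.Injective Φ := by
    intro p q h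
    have h1 : p.1 = q.1 := by rw [← hΦ0 p, ← hΦ0 q, h]
    have h2 : p.2 = q.2 := by
      refine Equiv.ext fun k => ?_
      have := congrArg (fun τ : Equiv.Perm (Fin (n+1)) => τ (Fin.succ k)) h
      simp only [hΦsucc] at this
      rw [h1] at this
      exact Fin.succAbove_right_injective this
    exact Prod.ext h1 h2
  have hbij : Function.Bijective Φ := by
    rw [Fintype.bijective_iff_injective_and_card]
    refine ⟨hinj, ?_⟩
    simp [Fintype.card_perm, Nat.factorial_succ, Nat.mul_comm]
  have h1 : ∑ p : Fin (n+1) × Equiv.Perm (Fin n), g (θ ∘ p.1.succAbove ∘ p.2)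
      = ∑ i : Fin (n+1), ∑ σ : Equiv.Perm (Fin n), g (θ ∘ i.succAbove ∘ σ) :=
    Fintype.sum_prod_type _
  rw [← h1]
  refine Fintype.sum_bijective Φ hbij _ _ fun p => ?_
  show g (θ ∘ p.1.succAbove ∘ p.2) = g (θ ∘ (Φ p) ∘ Fin.succ)
  exact congrArg g (funext fun k => (congrArg θ (hΦsucc p k)).symm)

theorem stmt_3 {n : ℕ} (hn : 1 ≤ n) {D : Type} [Fintype D] [Nonempty D]
    {Θ : Type} [Nonempty Θ]
    (v : Fin (n+1) → D → Θ → ℝ) (f : (Fin (n+1) → Θ) → D)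
    (hf : ∀ (θ : Fin (n+1) → Θ) (d : D),
      ∑ i, v i d (θ i) ≤ ∑ i, v i (f θ) (θ i))
    (hVCGperm : ∀ (θ : Fin (n+1) → Θ) (σ : Equiv.Perm (Fin (n+1))),
      VCGtot v f (fun i => θ (σ⁻¹ i)) = VCGtot v f θ)
    (r : Fin (n+1) → (Fin n → Θ) → ℝ)
    (r' : (Fin n → Θ) → ℝ)
    (hr' : ∀ x : Fin n → Θ, r' x =
      (1 / (Nat.factorial (n+1) : ℝ)) *
        ∑ j, ∑ σ : Equiv.Perm (Fin n), r j (fun i => x (σ⁻¹ i)))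
    (r0 : (Fin n → Θ) → ℝ)
    (hr0perm : ∀ (x : Fin n → Θ) (σ : Equiv.Perm (Fin n)),
      r0 (fun i => x (σ⁻¹ i)) = r0 x)
    (hdom : (∀ θ : Fin (n+1) → Θ,
        ∑ i : Fin (n+1), r0 (θ ∘ i.succAbove) ≤ ∑ i : Fin (n+1), r i (θ ∘ i.succAbove)) ∧
      (∃ θ : Fin (n+1) → Θ,
        ∑ i : Fin (n+1), r0 (θ ∘ i.succAbove) < ∑ i : Fin (n+1), r i (θ ∘ i.succAbove))) :
    (∀ θ : Fin (n+1) → Θ,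
      ∑ i : Fin (n+1), r0 (θ ∘ i.succAbove) ≤ ∑ i : Fin (n+1), r' (θ ∘ i.succAbove)) ∧
    (∃ θ : Fin (n+1) → Θ,
      ∑ i : Fin (n+1), r0 (θ ∘ i.succAbove) < ∑ i : Fin (n+1), r' (θ ∘ i.succAbove)) := by
  classical
  set c : ℝ := 1 / (Nat.factorial (n+1) : ℝ) with hc
  have hfacpos : (0 : ℝ) < (Nat.factorial (n+1) : ℝ) := by
    exact_mod_cast Nat.factorial_pos (n+1)
  have hcpos : 0 < c := by positivity
  have hcfac : c * (Nat.factorial (n+1) : ℝ) = 1 := by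
    rw [hc, one_div, inv_mul_cancel₀ hfacpos.ne']
  -- r0 is invariant under right composition with a permutation
  have hr0comp : ∀ (x : Fin n → Θ) (σ : Equiv.Perm (Fin n)), r0 (x ∘ σ) = r0 x := by
    intro x σ
    have := hr0perm x σ⁻¹
    simpa [Function.comp_def] using this
  -- representation of the r0 side
  have hB : ∀ θ : Fin (n+1) → Θ,
      ∑ τ : Equiv.Perm (Fin (n+1)), ∑ j : Fin (n+1), r0 ((θ ∘ τ) ∘ j.succAbove)
        = (Nat.factorial (n+1) : ℝ) * ∑ i : Fin (n+1), r0 (θ ∘ i.succAbove) := by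
    intro θ
    rw [Finset.sum_comm]
    have hstep : ∀ j : Fin (n+1),
        ∑ τ : Equiv.Perm (Fin (n+1)), r0 ((θ ∘ τ) ∘ j.succAbove)
          = (Nat.factorial n : ℝ) * ∑ i : Fin (n+1), r0 (θ ∘ i.succAbove) := by
      intro j
      have h1 : ∑ τ : Equiv.Perm (Fin (n+1)), r0 (θ ∘ τ ∘ j.succAbove)
          = ∑ τ : Equiv.Perm (Fin (n+1)), r0 (θ ∘ τ ∘ Fin.succ) :=
        sum_perm_comp_eq r0 θ _ _ Fin.succAbove_right_injective (Fin.succ_injective n)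
      have h2 : ∑ τ : Equiv.Perm (Fin (n+1)), r0 (θ ∘ τ ∘ Fin.succ)
          = ∑ i : Fin (n+1), ∑ σ : Equiv.Perm (Fin n), r0 (θ ∘ i.succAbove ∘ σ) :=
        (sum_prod_eq r0 θ).symm
      calc ∑ τ : Equiv.Perm (Fin (n+1)), r0 ((θ ∘ τ) ∘ j.succAbove)
          = ∑ i : Fin (n+1), ∑ σ : Equiv.Perm (Fin n), r0 (θ ∘ i.succAbove ∘ σ) :=
            h1.trans h2
        _ = ∑ i : Fin (n+1), ∑ _σ : Equiv.Perm (Fin n), r0 (θ ∘ i.succAbove) := by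
            refine Finset.sum_congr rfl fun i _ => Finset.sum_congr rfl fun σ _ => ?_
            exact hr0comp (θ ∘ i.succAbove) σ
        _ = (Nat.factorial n : ℝ) * ∑ i : Fin (n+1), r0 (θ ∘ i.succAbove) := by
            simp [Finset.sum_const, Fintype.card_perm, Finset.mul_sum, mul_comm]
    calc ∑ j : Fin (n+1), ∑ τ : Equiv.Perm (Fin (n+1)), r0 ((θ ∘ τ) ∘ j.succAbove)
        = ∑ _j : Fin (n+1), (Nat.factorial n : ℝ) * ∑ i : Fin (n+1), r0 (θ ∘ i.succAbove) :=
          Finset.sum_congr rfl fun j _ => hstep j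
      _ = (Nat.factorial (n+1) : ℝ) * ∑ i : Fin (n+1), r0 (θ ∘ i.succAbove) := by
          simp only [Finset.sum_const, Finset.card_univ, Fintype.card_fin,
            nsmul_eq_mul, Nat.factorial_succ]
          push_cast
          ring
  -- representation of the r' side
  have hA : ∀ θ : Fin (n+1) → Θ,
      ∑ i : Fin (n+1), r' (θ ∘ i.succAbove)
        = c * ∑ τ : Equiv.Perm (Fin (n+1)), ∑ j : Fin (n+1), r j ((θ ∘ τ) ∘ j.succAbove) := by
    intro θ
    have e1 : ∑ i : Fin (n+1), r' (θ ∘ i.succAbove)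
        = c * ∑ i : Fin (n+1), ∑ j : Fin (n+1), ∑ σ : Equiv.Perm (Fin n),
            r j (θ ∘ i.succAbove ∘ σ) := by
      rw [Finset.mul_sum]
      refine Finset.sum_congr rfl fun i _ => ?_
      rw [hr' (θ ∘ i.succAbove)]
      congr 1
      refine Finset.sum_congr rfl fun j _ => ?_
      refine Fintype.sum_equiv (Equiv.inv (Equiv.Perm (Fin n))) _ _ fun σ => ?_
      rfl
    rw [e1]
    congr 1
    rw [Finset.sum_comm]
    have e2 : ∀ j : Fin (n+1),
        ∑ i : Fin (n+1), ∑ σ : Equiv.Perm (Fin n), r j (θ ∘ i.succAbove ∘ σ)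
          = ∑ τ : Equiv.Perm (Fin (n+1)), r j ((θ ∘ τ) ∘ j.succAbove) := by
      intro j
      rw [sum_prod_eq (r j) θ]
      exact sum_perm_comp_eq (r j) θ _ _ (Fin.succ_injective n)
        Fin.succAbove_right_injective
    rw [Finset.sum_congr rfl fun j _ => e2 j, Finset.sum_comm]
  constructor
  · intro θ
    have h1 : ∑ i : Fin (n+1), r0 (θ ∘ i.succAbove)
        = c * ∑ τ : Equiv.Perm (Fin (n+1)), ∑ j : Fin (n+1), r0 ((θ ∘ τ) ∘ j.succAbove) := by
      rw [hB θ, ← mul_assoc, hcfac, one_mul]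
    rw [h1, hA θ]
    refine mul_le_mul_of_nonneg_left ?_ hcpos.le
    exact Finset.sum_le_sum fun τ _ => hdom.1 (θ ∘ τ)
  · obtain ⟨θ, hθ⟩ := hdom.2
    refine ⟨θ, ?_⟩
    have h1 : ∑ i : Fin (n+1), r0 (θ ∘ i.succAbove)
        = c * ∑ τ : Equiv.Perm (Fin (n+1)), ∑ j : Fin (n+1), r0 ((θ ∘ τ) ∘ j.succAbove) := by
      rw [hB θ, ← mul_assoc, hcfac, one_mul]
    rw [h1, hA θ]
    refine mul_lt_mul_of_pos_left ?_ hcpos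
    refine Finset.sum_lt_sum (fun τ _ => hdom.1 (θ ∘ τ)) ⟨1, Finset.mem_univ _, ?_⟩
    have hid : θ ∘ ⇑(1 : Equiv.Perm (Fin (n+1))) = θ := rfl
    rw [hid]
    exact hθ
end

section
/- Suppose n ≥ 3, all type sets equal a common set Θ_0 containing at least n−1 elements, and there exists at least one non-deficit anonymous Groves mechanism determined by a permutation-independent function r : Θ_0^{n−1} → ℝ. Then there exist two non-deficit anonymous Groves mechanisms r and r' such that r collectively dominates r' but r does not individually dominate r'. -/
noncomputable def gfun (n : ℕ) : ℕ → ℝ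
  | 0 => n
  | 1 => -1
  | 2 => 2 / ((n : ℝ) - 1)
  | _ => 0

noncomputable def cntA {Θ : Type} {m : ℕ} (a : Θ) (y : Fin m → Θ) : ℕ :=
  letI := Classical.decEq Θ
  (Finset.univ.filter fun j => y j = a).card

lemma cntA_perm {Θ : Type} {m : ℕ} (a : Θ) (y : Fin m → Θ) (σ : Equiv.Perm (Fin m)) :
    cntA a (fun i => y (σ⁻¹ i)) = cntA a y := by
  classical
  unfold cntA
  apply Finset.card_bij (fun j _ => σ⁻¹ j)
  · intro j hj; simp_all
  · intro j _ j' _ h; exact σ⁻¹.injective h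
  · intro j hj
    refine ⟨σ j, ?_, by simp⟩
    simp_all

open Classical in
lemma cntA_succAbove {Θ : Type} {m : ℕ} (a : Θ) (θ : Fin (m+1) → Θ) (i : Fin (m+1)) :
    cntA a (θ ∘ i.succAbove) + (if θ i = a then 1 else 0) = cntA a θ := by
  classical
  unfold cntA
  rw [Finset.card_filter, Finset.card_filter,
    Fin.sum_univ_succAbove (fun j => if θ j = a then 1 else 0) i]
  simp [Function.comp, add_comm]

lemma sum_g (n : ℕ) {Θ : Type} (a : Θ) (θ : Fin (n+1) → Θ) :
    ∑ i : Fin (n+1), gfun n (cntA a (θ ∘ i.succAbove)) =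
      (cntA a θ : ℝ) * gfun n (cntA a θ - 1) +
      ((n + 1 - cntA a θ : ℕ) : ℝ) * gfun n (cntA a θ) := by
  classical
  set k := cntA a θ with hk
  have hterm : ∀ i, gfun n (cntA a (θ ∘ i.succAbove)) =
      if θ i = a then gfun n (k-1) else gfun n k := by
    intro i
    have h2 := cntA_succAbove a θ i
    by_cases h : θ i = a
    · rw [if_pos h] at h2
      have e : cntA a (θ ∘ i.succAbove) = k - 1 := by omega
      rw [if_pos h, e]
    · rw [if_neg h] at h2
      have e : cntA a (θ ∘ i.succAbove) = k := by omega
      rw [if_neg h, e]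
  rw [Finset.sum_congr rfl (fun i _ => hterm i), Finset.sum_ite]
  rw [Finset.sum_const, Finset.sum_const]
  have hc1 : (Finset.univ.filter fun i => θ i = a).card = k := by
    rw [hk]; unfold cntA; congr
  have hc2 : (Finset.univ.filter fun i => ¬ θ i = a).card = n + 1 - k := by
    have := Finset.card_filter_add_card_filter_not (s := (Finset.univ : Finset (Fin (n+1)))) (p := fun i => θ i = a)
    simp at this
    omega
  rw [hc1, hc2]
  simp [nsmul_eq_mul]

lemma F_nonneg (n : ℕ) (hn : 2 ≤ n) (k : ℕ) :
    0 ≤ (k:ℝ) * gfun n (k-1) + ((n+1-k:ℕ):ℝ) * gfun n k := by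
  have h1 : (1:ℝ) ≤ (n:ℝ) - 1 := by
    have : (2:ℝ) ≤ (n:ℝ) := by exact_mod_cast hn
    linarith
  match k with
  | 0 => simp [gfun]; positivity
  | 1 =>
    have e : ((n + 1 - 1 : ℕ) : ℝ) = (n : ℝ) := by norm_num
    show (0:ℝ) ≤ (1:ℕ) * gfun n 0 + ((n+1-1:ℕ):ℝ) * gfun n 1
    rw [e]
    simp only [gfun]
    push_cast
    ring_nf
    linarith
  | 2 =>
    show (0:ℝ) ≤ (2:ℕ) * gfun n 1 + ((n+1-2:ℕ):ℝ) * gfun n 2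
    have e : ((n + 1 - 2 : ℕ) : ℝ) = (n : ℝ) - 1 := by
      have h5 : n + 1 - 2 = n - 1 := by omega
      rw [h5, Nat.cast_sub (by omega)]
      simp
    rw [e]
    simp only [gfun]
    have h2 : ((n:ℝ)-1) * (2/((n:ℝ)-1)) = 2 := by
      field_simp
    rw [h2]
    push_cast; linarith
  | 3 =>
    show (0:ℝ) ≤ (3:ℕ) * gfun n 2 + ((n+1-3:ℕ):ℝ) * gfun n 3
    simp only [gfun]
    have h3 : (0:ℝ) ≤ 2 / ((n:ℝ)-1) := by positivity
    have h4 : (0:ℝ) ≤ ((n+1-3:ℕ):ℝ) := by positivity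
    push_cast
    nlinarith
  | (k+4) =>
    show (0:ℝ) ≤ ((k+4:ℕ):ℝ) * gfun n (k+3) + ((n+1-(k+4):ℕ):ℝ) * gfun n (k+4)
    simp [gfun]

theorem stmt_4 {n : ℕ} (hn : 2 ≤ n) {D : Type} [Fintype D] [Nonempty D]
    {Θ : Type} [Nonempty Θ]
    (hcard : ∃ x : Fin n → Θ, Function.Injective x)
    (v : Fin (n+1) → D → Θ → ℝ) (f : (Fin (n+1) → Θ) → D)
    (hf : ∀ (θ : Fin (n+1) → Θ) (d : D),
      ∑ i, v i d (θ i) ≤ ∑ i, v i (f θ) (θ i))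
    (r : (Fin n → Θ) → ℝ)
    (hperm : ∀ (x : Fin n → Θ) (σ : Equiv.Perm (Fin n)),
      r (fun i => x (σ⁻¹ i)) = r x)
    (hnd : ∀ θ : Fin (n+1) → Θ,
      ∑ i : Fin (n+1), r (θ ∘ i.succAbove) ≤ VCGtot v f θ) :
    ∃ r₁ r₂ : (Fin n → Θ) → ℝ,
      (∀ (x : Fin n → Θ) (σ : Equiv.Perm (Fin n)), r₁ (fun i => x (σ⁻¹ i)) = r₁ x) ∧
      (∀ (x : Fin n → Θ) (σ : Equiv.Perm (Fin n)), r₂ (fun i => x (σ⁻¹ i)) = r₂ x) ∧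
      (∀ θ : Fin (n+1) → Θ, ∑ i : Fin (n+1), r₁ (θ ∘ i.succAbove) ≤ VCGtot v f θ) ∧
      (∀ θ : Fin (n+1) → Θ, ∑ i : Fin (n+1), r₂ (θ ∘ i.succAbove) ≤ VCGtot v f θ) ∧
      -- r₁ collectively dominates r₂
      ((∀ θ : Fin (n+1) → Θ,
          ∑ i : Fin (n+1), r₂ (θ ∘ i.succAbove) ≤ ∑ i : Fin (n+1), r₁ (θ ∘ i.succAbove)) ∧
        (∃ θ : Fin (n+1) → Θ,
          ∑ i : Fin (n+1), r₂ (θ ∘ i.succAbove) < ∑ i : Fin (n+1), r₁ (θ ∘ i.succAbove))) ∧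
      -- r₁ does not individually dominate r₂
      ¬ ((∀ (i : Fin (n+1)) (θ : Fin (n+1) → Θ), r₂ (θ ∘ i.succAbove) ≤ r₁ (θ ∘ i.succAbove)) ∧
        (∃ (i : Fin (n+1)) (θ : Fin (n+1) → Θ),
          r₂ (θ ∘ i.succAbove) < r₁ (θ ∘ i.succAbove))) := by
    classical
  obtain ⟨x, hx⟩ := hcard
  haveI : NeZero n := ⟨by omega⟩
  set a := x ⟨0, by omega⟩ with ha
  set b := x ⟨1, by omega⟩ with hb
  have hab : b ≠ a := by
    intro h
    have := hx h
    simp [Fin.ext_iff] at this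
  set h : (Fin n → Θ) → ℝ := fun y => gfun n (cntA a y) with hh
  -- the sum of h over subprofiles is nonneg
  have hsum : ∀ θ : Fin (n+1) → Θ, 0 ≤ ∑ i : Fin (n+1), h (θ ∘ i.succAbove) := by
    intro θ
    rw [hh]
    simp only
    rw [sum_g n a θ]
    exact F_nonneg n hn (cntA a θ)
  refine ⟨r, fun y => r y - h y, hperm, ?_, hnd, ?_, ⟨?_, ?_⟩, ?_⟩
  · -- permutation invariance of r₂
    intro y σ
    simp only
    rw [hperm, hh]
    simp only
    rw [cntA_perm]
  · -- non-deficit of r₂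
    intro θ
    simp only
    rw [Finset.sum_sub_distrib]
    have := hsum θ
    have := hnd θ
    linarith
  · -- collective weak dominance
    intro θ
    simp only
    rw [Finset.sum_sub_distrib]
    have := hsum θ
    linarith
  · -- strict somewhere: θ ≡ b
    refine ⟨fun _ => b, ?_⟩
    simp only
    rw [Finset.sum_sub_distrib]
    have hc0 : cntA a (fun _ : Fin (n+1) => b) = 0 := by
      unfold cntA
      simp [hab]
    have hpos : 0 < ∑ i : Fin (n+1), h ((fun _ : Fin (n+1) => b) ∘ i.succAbove) := by
      rw [hh]
      simp only
      rw [sum_g n a (fun _ => b), hc0]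
      simp only [Nat.sub_zero, Nat.cast_zero, zero_mul, zero_add]
      have : gfun n 0 = (n : ℝ) := rfl
      rw [this]
      positivity
    linarith
  · -- not individual dominance
    rintro ⟨hA, -⟩
    set θ₀ : Fin (n+1) → Θ := fun j => if j = 0 then a else b with hθ₀
    have hA' := hA (Fin.last n) θ₀
    simp only at hA'
    have hc1 : cntA a (θ₀ ∘ (Fin.last n).succAbove) = 1 := by
      unfold cntA
      have hset : (Finset.univ.filter fun j : Fin n => (θ₀ ∘ (Fin.last n).succAbove) j = a)
          = {(0 : Fin n)} := by
        ext j
        simp only [Finset.mem_filter, Finset.mem_univ, true_and, Finset.mem_singleton,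
          Function.comp, hθ₀, Fin.succAbove_last]
        by_cases hj : j.castSucc = (0 : Fin (n+1))
        · have hj0 : j = 0 := by
            simp only [Fin.ext_iff] at hj ⊢
            simpa using hj
          simp [hj, hj0]
        · have : j ≠ 0 := by
            intro hj0
            apply hj
            rw [hj0]
            rfl
          simp [hj, hab, this]
      rw [hset]
      simp
    have : h (θ₀ ∘ (Fin.last n).succAbove) = -1 := by
      rw [hh]
      simp only
      rw [hc1]
      rfl
    rw [this] at hA'
    linarith
end

section
/- In the public project problem with equal participation costs and n = 2 agents, for an anonymous non-deficit Groves mechanism determined by a function r : [0,c] → ℝ, the following are equivalent: (1) the mechanism is individually undominated among non-deficit Groves mechanisms; (2) r(x) = 0 for all x ∈ [0,c], i.e., the mechanism is the VCG mechanism; (3) the mechanism is collectively undominated among non-deficit Groves mechanisms. -/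
/-!
STATEMENT 14: Public project with equal participation costs, n = 2 agents,
cost c > 0, types in [0,c], VCG payments
  VCG_i(θ) = max{0, Σ_{j≠i}(θ_j − c/2)} − f(θ)·Σ_{j≠i}(θ_j − c/2),
f(θ) = 1 iff θ₁ + θ₂ ≥ c. For an anonymous non-deficit Groves mechanism
determined by r : [0,c] → ℝ (agent i receives r(θ_{-i}), where θ_{-i} is the
other agent's type, encoded as θ (i.succAbove 0)), the following are
equivalent: (1) the mechanism is individually undominated among non-deficit
Groves mechanisms; (2) r = 0 on [0,c], i.e. it is the VCG mechanism;
(3) it is collectively undominated among non-deficit Groves mechanisms.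
-/

/-- VCG payment of agent `i` in the equal-cost public project with `N` agents
and cost `c`. -/
noncomputable def ppVCGi (N : ℕ) (c : ℝ) (i : Fin N) (θ : Fin N → ℝ) : ℝ :=
  max 0 (∑ j ∈ Finset.univ.erase i, (θ j - c / N)) -
    (if c ≤ ∑ j, θ j then 1 else 0) * ∑ j ∈ Finset.univ.erase i, (θ j - c / N)

lemma pp_hmax (t : ℝ) : max 0 t - t = max 0 (-t) := by
  rcases le_total t 0 with h | h
  · rw [max_eq_left h, max_eq_right (by linarith)]; ring
  · rw [max_eq_right h, max_eq_left (by linarith)]; ring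

lemma ppsum (c : ℝ) (θ : Fin 2 → ℝ) :
    ∑ i : Fin 2, ppVCGi 2 c i θ =
    if c ≤ θ 0 + θ 1 then max 0 (c/2 - θ 1) + max 0 (c/2 - θ 0)
    else max 0 (θ 1 - c/2) + max 0 (θ 0 - c/2) := by
  have h0 : (Finset.univ.erase (0 : Fin 2)) = {1} := by decide
  have h1 : (Finset.univ.erase (1 : Fin 2)) = {0} := by decide
  simp only [ppVCGi, Fin.sum_univ_two, h0, h1, Finset.sum_singleton]
  split_ifs with h
  · push_cast
    rw [one_mul, one_mul]
    have e1 : c/2 - θ 1 = -(θ 1 - c/2) := by ring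
    have e0 : c/2 - θ 0 = -(θ 0 - c/2) := by ring
    rw [e1, e0, ← pp_hmax, ← pp_hmax]
  · push_cast; ring

lemma ppsum_nonneg (c : ℝ) (θ : Fin 2 → ℝ) : 0 ≤ ∑ i : Fin 2, ppVCGi 2 c i θ := by
  rw [ppsum]
  split_ifs <;> positivity

lemma ppsum_diag (c x : ℝ) : ∑ i : Fin 2, ppVCGi 2 c i (fun _ => x) = 0 := by
  rw [ppsum]
  show (if c ≤ x + x then max 0 (c/2 - x) + max 0 (c/2 - x)
    else max 0 (x - c/2) + max 0 (x - c/2)) = 0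
  split_ifs with h
  · rw [max_eq_left (by linarith)]; ring
  · rw [max_eq_left (by linarith)]; ring

lemma ppsum_diag' (c x : ℝ) :
    (ppVCGi 2 c 0 fun _ => x) + ppVCGi 2 c 1 (fun _ => x) = 0 := by
  have h := ppsum_diag c x
  rwa [Fin.sum_univ_two] at h

lemma pp_sA0 : ((0 : Fin 2).succAbove 0) = 1 := rfl
lemma pp_sA1 : ((1 : Fin 2).succAbove 0) = 0 := rfl

theorem stmt_14 (c : ℝ) (hc : 0 < c) (r : ℝ → ℝ)
    (hnd : ∀ θ : Fin 2 → ℝ, (∀ i, θ i ∈ Set.Icc 0 c) →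
      ∑ i : Fin 2, r (θ (i.succAbove 0)) ≤ ∑ i : Fin 2, ppVCGi 2 c i θ) :
    -- (1) ↔ (2)
    ((¬ ∃ r' : Fin 2 → ℝ → ℝ,
        (∀ θ : Fin 2 → ℝ, (∀ i, θ i ∈ Set.Icc 0 c) →
          ∑ i : Fin 2, r' i (θ (i.succAbove 0)) ≤ ∑ i : Fin 2, ppVCGi 2 c i θ) ∧
        (∀ (i : Fin 2) (θ : Fin 2 → ℝ), (∀ j, θ j ∈ Set.Icc 0 c) →
          r (θ (i.succAbove 0)) ≤ r' i (θ (i.succAbove 0))) ∧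
        (∃ (i : Fin 2) (θ : Fin 2 → ℝ), (∀ j, θ j ∈ Set.Icc 0 c) ∧
          r (θ (i.succAbove 0)) < r' i (θ (i.succAbove 0)))) ↔
      (∀ x ∈ Set.Icc (0:ℝ) c, r x = 0)) ∧
    -- (2) ↔ (3)
    ((∀ x ∈ Set.Icc (0:ℝ) c, r x = 0) ↔
      (¬ ∃ r' : Fin 2 → ℝ → ℝ,
        (∀ θ : Fin 2 → ℝ, (∀ i, θ i ∈ Set.Icc 0 c) →
          ∑ i : Fin 2, r' i (θ (i.succAbove 0)) ≤ ∑ i : Fin 2, ppVCGi 2 c i θ) ∧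
        (∀ θ : Fin 2 → ℝ, (∀ j, θ j ∈ Set.Icc 0 c) →
          ∑ i : Fin 2, r (θ (i.succAbove 0)) ≤ ∑ i : Fin 2, r' i (θ (i.succAbove 0))) ∧
        (∃ θ : Fin 2 → ℝ, (∀ j, θ j ∈ Set.Icc 0 c) ∧
          ∑ i : Fin 2, r (θ (i.succAbove 0)) < ∑ i : Fin 2, r' i (θ (i.succAbove 0))))) := by
  -- From non-deficit on the diagonal: r ≤ 0 on [0,c]
  have hrle : ∀ x ∈ Set.Icc (0:ℝ) c, r x ≤ 0 := by
    intro x hx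
    have h := hnd (fun _ => x) (fun _ => hx)
    simp only [Fin.sum_univ_two, pp_sA0, pp_sA1, ppsum_diag, ppsum_diag'] at h
    linarith
  constructor
  · constructor
    · -- (1) → (2), contrapositive: r' := 0 individually dominates
      intro h1 x hx
      by_contra hx0
      have hxneg : r x < 0 := lt_of_le_of_ne (hrle x hx) hx0
      refine h1 ⟨fun _ _ => 0, ?_, ?_, 0, fun _ => x, fun _ => hx, ?_⟩
      · intro θ _
        simp only [Fin.sum_univ_two, pp_sA0, pp_sA1]
        simpa using ppsum_nonneg c θ
      · intro i θ hθ
        exact hrle _ (hθ _)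
      · simpa using hxneg
    · -- (2) → (1)
      rintro h2 ⟨r', hnd', hdom, i, θ, hθ, hstrict⟩
      set x := θ (i.succAbove 0) with hxdef
      have hxmem : x ∈ Set.Icc (0:ℝ) c := hθ _
      have hge : ∀ (j : Fin 2) (y : ℝ), y ∈ Set.Icc (0:ℝ) c → 0 ≤ r' j y := by
        intro j y hy
        have h := hdom j (fun _ => y) (fun _ => hy)
        rw [h2 y hy] at h
        exact h
      have h := hnd' (fun _ => x) (fun _ => hxmem)
      simp only [Fin.sum_univ_two, pp_sA0, pp_sA1, ppsum_diag, ppsum_diag'] at h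
      have h0 := hge 0 x hxmem
      have h1 := hge 1 x hxmem
      have hx' : 0 < r' i x := lt_of_le_of_lt (le_of_eq (h2 x hxmem).symm) hstrict
      have hi : i = 0 ∨ i = 1 := by omega
      rcases hi with hi | hi <;> subst hi <;> linarith
  · constructor
    · -- (2) → (3)
      rintro h2 ⟨r', hnd', hdom, θ, hθ, hstrict⟩
      have hg : ∀ y ∈ Set.Icc (0:ℝ) c, r' 0 y + r' 1 y = 0 := by
        intro y hy
        have hle := hnd' (fun _ => y) (fun _ => hy)
        simp only [Fin.sum_univ_two, pp_sA0, pp_sA1, ppsum_diag, ppsum_diag'] at hle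
        have hge := hdom (fun _ => y) (fun _ => hy)
        simp only [Fin.sum_univ_two, pp_sA0, pp_sA1] at hge
        rw [h2 y hy] at hge
        linarith
      have ha := hdom θ hθ
      simp only [Fin.sum_univ_two, pp_sA0, pp_sA1] at ha
      rw [h2 _ (hθ 1), h2 _ (hθ 0)] at ha
      have hb := hdom ![θ 1, θ 0] (by intro j; fin_cases j <;> simpa using hθ _)
      simp only [Fin.sum_univ_two, pp_sA0, pp_sA1, Matrix.cons_val_zero, Matrix.cons_val_one,
        Matrix.head_cons] at hb
      rw [h2 _ (hθ 0), h2 _ (hθ 1)] at hb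
      have hg0 := hg _ (hθ 0)
      have hg1 := hg _ (hθ 1)
      simp only [Fin.sum_univ_two, pp_sA0, pp_sA1] at hstrict
      rw [h2 _ (hθ 1), h2 _ (hθ 0)] at hstrict
      linarith
    · -- (3) → (2), contrapositive
      intro h3 x hx
      by_contra hx0
      have hxneg : r x < 0 := lt_of_le_of_ne (hrle x hx) hx0
      refine h3 ⟨fun _ _ => 0, ?_, ?_, fun _ => x, fun _ => hx, ?_⟩
      · intro θ _
        simp only [Fin.sum_univ_two, pp_sA0, pp_sA1]
        simpa using ppsum_nonneg c θ
      · intro θ hθ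
        simp only [Fin.sum_univ_two, pp_sA0, pp_sA1]
        have := hrle _ (hθ 0); have := hrle _ (hθ 1); linarith
      · simp only [Fin.sum_univ_two, pp_sA0, pp_sA1]
        simpa using hxneg
end

section
/- In the public project problem with equal participation costs, for every agent i and every θ_{-i} ∈ [0,c]^{n−1}: the total VCG payment Σ_{k=1}^n VCG_k(θ'_i, θ_{-i}) is nonnegative for every θ'_i ∈ [0,c], and there exists θ'_i ∈ [0,c] for which it equals 0; hence inf_{θ'_i ∈ [0,c]} Σ_{k=1}^n VCG_k(θ'_i, θ_{-i}) = 0, and consequently the Bailey-Cavallo mechanism (which redistributes to each agent i the amount (1/n)·inf_{θ'_i} Σ_k VCG_k(θ'_i,θ_{-i})) coincides with the VCG mechanism. -/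
lemma ppVCGi_nonneg (N : ℕ) (c : ℝ) (i : Fin N) (θ : Fin N → ℝ) :
    0 ≤ ppVCGi N c i θ := by
  unfold ppVCGi
  split_ifs with h
  · have := le_max_right (0:ℝ) (∑ j ∈ Finset.univ.erase i, (θ j - c / N))
    linarith
  · have := le_max_left (0:ℝ) (∑ j ∈ Finset.univ.erase i, (θ j - c / N))
    linarith

lemma ppVCGi_zero_pos {N : ℕ} {c : ℝ} {k : Fin N} {θ : Fin N → ℝ}
    (h1 : c ≤ ∑ j, θ j) (h2 : 0 ≤ ∑ j ∈ Finset.univ.erase k, (θ j - c / N)) :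
    ppVCGi N c k θ = 0 := by
  unfold ppVCGi
  rw [if_pos h1, max_eq_right h2]; ring

lemma ppVCGi_zero_neg {N : ℕ} {c : ℝ} {k : Fin N} {θ : Fin N → ℝ}
    (h1 : ¬ c ≤ ∑ j, θ j) (h2 : ∑ j ∈ Finset.univ.erase k, (θ j - c / N) ≤ 0) :
    ppVCGi N c k θ = 0 := by
  unfold ppVCGi
  rw [if_neg h1, max_eq_left h2]; ring

lemma erase_sum_split {n : ℕ} (c : ℝ) (k : Fin n) (θ : Fin n → ℝ) (hn : 1 ≤ n) :
    ∑ j ∈ Finset.univ.erase k, (θ j - c / n)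
      = (∑ j ∈ Finset.univ.erase k, θ j) - ((n : ℝ) - 1) * (c / n) := by
  rw [Finset.sum_sub_distrib, Finset.sum_const, Finset.card_erase_of_mem (Finset.mem_univ k),
    Finset.card_univ, Fintype.card_fin, nsmul_eq_mul, Nat.cast_sub hn]
  push_cast; ring

theorem stmt_15 {n : ℕ} (hn : 2 ≤ n) (c : ℝ) (hc : 0 < c) :
    ∀ (i : Fin n) (θ : Fin n → ℝ), (∀ j, θ j ∈ Set.Icc 0 c) →
      (∀ x ∈ Set.Icc (0:ℝ) c,
        0 ≤ ∑ k, ppVCGi n c k (Function.update θ i x)) ∧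
      (∃ x ∈ Set.Icc (0:ℝ) c,
        ∑ k, ppVCGi n c k (Function.update θ i x) = 0) ∧
      sInf {y : ℝ | ∃ x ∈ Set.Icc (0:ℝ) c,
        y = ∑ k, ppVCGi n c k (Function.update θ i x)} = 0 ∧
      ppVCGi n c i θ -
        (1 / (n : ℝ)) * sInf {y : ℝ | ∃ x ∈ Set.Icc (0:ℝ) c,
          y = ∑ k, ppVCGi n c k (Function.update θ i x)} = ppVCGi n c i θ := by
  intro i θ hθ
  have hn1 : 1 ≤ n := le_trans (by norm_num) hn
  have hnR : (0:ℝ) < (n : ℝ) := by exact_mod_cast Nat.lt_of_lt_of_le (by norm_num) hn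
  have hcn : (n : ℝ) * (c / n) = c := by field_simp
  have ha : ∀ x ∈ Set.Icc (0:ℝ) c,
      0 ≤ ∑ k, ppVCGi n c k (Function.update θ i x) :=
    fun x _ => Finset.sum_nonneg fun k _ => ppVCGi_nonneg n c k _
  set A := ∑ j ∈ Finset.univ.erase i, θ j with hA
  have hupd : ∀ (x : ℝ), ∑ j ∈ Finset.univ.erase i, Function.update θ i x j = A := by
    intro x
    exact Finset.sum_congr rfl fun j hj =>
      Function.update_of_ne (Finset.ne_of_mem_erase hj) _ _
  have htot : ∀ (x : ℝ), ∑ j, Function.update θ i x j = x + A := by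
    intro x
    rw [Finset.sum_update_of_mem (Finset.mem_univ i), ← Finset.erase_eq]
  have hb : ∃ x ∈ Set.Icc (0:ℝ) c,
      ∑ k, ppVCGi n c k (Function.update θ i x) = 0 := by
    by_cases hcase : ((n:ℝ) - 1) * (c / n) ≤ A
    · refine ⟨c, ⟨le_of_lt hc, le_refl c⟩, Finset.sum_eq_zero fun k _ => ?_⟩
      have hn1R : (1:ℝ) ≤ (n:ℝ) := by exact_mod_cast hn1
      have hdiv : (0:ℝ) < c / n := div_pos hc hnR
      have hA0 : 0 ≤ A := le_trans (mul_nonneg (by linarith) hdiv.le) hcase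
      have htot' : c ≤ ∑ j, Function.update θ i c j := by
        rw [htot]; linarith
      apply ppVCGi_zero_pos htot'
      rw [erase_sum_split c k _ hn1]
      by_cases hk : k = i
      · subst hk; rw [hupd]; linarith
      · have hnonneg : ∀ j ∈ Finset.univ.erase k, 0 ≤ Function.update θ i c j := by
          intro j _
          rcases eq_or_ne j i with rfl | hj
          · rw [Function.update_self]; exact le_of_lt hc
          · rw [Function.update_of_ne hj]; exact (hθ j).1
        have hi_mem : i ∈ Finset.univ.erase k :=
          Finset.mem_erase.mpr ⟨fun h => hk h.symm, Finset.mem_univ i⟩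
        have hsingle : Function.update θ i c i ≤
            ∑ j ∈ Finset.univ.erase k, Function.update θ i c j :=
          Finset.single_le_sum hnonneg hi_mem
        rw [Function.update_self] at hsingle
        nlinarith
    · push_neg at hcase
      refine ⟨0, ⟨le_refl _, le_of_lt hc⟩, Finset.sum_eq_zero fun k _ => ?_⟩
      have htot' : ¬ c ≤ ∑ j, Function.update θ i (0:ℝ) j := by
        rw [htot]
        push_neg
        have : ((n:ℝ) - 1) * (c / n) < c := by nlinarith [div_pos hc hnR]
        linarith
      apply ppVCGi_zero_neg htot'
      rw [erase_sum_split c k _ hn1]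
      by_cases hk : k = i
      · subst hk; rw [hupd]; linarith
      · have hle : ∑ j ∈ Finset.univ.erase k, Function.update θ i (0:ℝ) j ≤ A := by
          have hi_mem : i ∈ Finset.univ.erase k :=
            Finset.mem_erase.mpr ⟨fun h => hk h.symm, Finset.mem_univ i⟩
          rw [← Finset.add_sum_erase _ _ hi_mem, Function.update_self, zero_add]
          have hsub : (Finset.univ.erase k).erase i ⊆ Finset.univ.erase i :=
            Finset.erase_subset_erase i (Finset.erase_subset k Finset.univ)
          calc ∑ j ∈ (Finset.univ.erase k).erase i, Function.update θ i (0:ℝ) j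
              = ∑ j ∈ (Finset.univ.erase k).erase i, θ j :=
                Finset.sum_congr rfl fun j hj =>
                  Function.update_of_ne (Finset.ne_of_mem_erase hj) _ _
            _ ≤ A := Finset.sum_le_sum_of_subset_of_nonneg hsub
                  fun j _ _ => (hθ j).1
        linarith
  set S : Set ℝ := {y : ℝ | ∃ x ∈ Set.Icc (0:ℝ) c,
      y = ∑ k, ppVCGi n c k (Function.update θ i x)} with hS
  obtain ⟨x0, hx0, hx0z⟩ := hb
  have h0mem : (0:ℝ) ∈ S := ⟨x0, hx0, hx0z.symm⟩
  have hbdd : ∀ y ∈ S, (0:ℝ) ≤ y := by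
    rintro y ⟨x, hx, rfl⟩; exact ha x hx
  have hinf : sInf S = 0 :=
    le_antisymm (csInf_le ⟨0, hbdd⟩ h0mem) (le_csInf ⟨0, h0mem⟩ hbdd)
  exact ⟨ha, ⟨x0, hx0, hx0z⟩, hinf, by rw [hinf]; ring⟩
end

section
/- In the public project problem with equal participation costs, there exists no non-deficit Groves mechanism that collectively dominates the VCG mechanism. That is, there is no family of redistribution functions r_i : [0,c]^{n−1} → ℝ satisfying Σ_i r_i(θ_{-i}) ≤ Σ_i VCG_i(θ) for all θ ∈ [0,c]^n (non-deficit) such that Σ_i r_i(θ_{-i}) ≥ 0 for all θ, with strict inequality for at least one θ. -/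
open Finset


/-- Mix two type profiles along a subset of coordinates. -/
def ppMix {n : ℕ} (S : Finset (Fin (n+1))) (θ η : Fin (n+1) → ℝ) : Fin (n+1) → ℝ :=
  fun j => if j ∈ S then η j else θ j

lemma ppMix_comp {n : ℕ} (i : Fin (n+1)) (S : Finset (Fin (n+1))) (θ η : Fin (n+1) → ℝ) :
    ppMix (insert i S) θ η ∘ i.succAbove = ppMix S θ η ∘ i.succAbove := by
  funext k
  have h : i.succAbove k ≠ i := Fin.succAbove_ne i k
  simp only [Function.comp_apply, ppMix, mem_insert, h, false_or]

/-- The fundamental finite-difference identity for sums of functions each of which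
ignores one coordinate. -/
lemma ppF_id {n : ℕ} (r : Fin (n+1) → (Fin n → ℝ) → ℝ) (θ η : Fin (n+1) → ℝ) :
    ∑ S ∈ (univ : Finset (Fin (n+1))).powerset,
      (-1:ℝ)^S.card * ∑ i, r i (ppMix S θ η ∘ i.succAbove) = 0 := by
  simp_rw [mul_sum]
  rw [sum_comm]
  refine sum_eq_zero fun i _ => ?_
  have huniv : (univ : Finset (Fin (n+1))) = insert i (univ.erase i) :=
    (insert_erase (mem_univ i)).symm
  rw [huniv, sum_powerset_insert (notMem_erase i univ)]
  have h : ∀ T ∈ (univ.erase i).powerset,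
      (-1:ℝ)^(insert i T).card * r i (ppMix (insert i T) θ η ∘ i.succAbove)
      = -((-1:ℝ)^T.card * r i (ppMix T θ η ∘ i.succAbove)) := by
    intro T hT
    have hiT : i ∉ T := fun h' => (notMem_erase i univ) (mem_powerset.1 hT h')
    rw [ppMix_comp, card_insert_of_notMem hiT, pow_succ]
    ring
  rw [sum_congr rfl h, sum_neg_distrib]
  ring

section
variable {n : ℕ} {c : ℝ}

lemma pp_erase_sum (θ : Fin (n+1) → ℝ) (i : Fin (n+1)) :
    ∑ j ∈ Finset.univ.erase i, (θ j - c / (n+1)) =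
      (∑ j ∈ Finset.univ.erase i, θ j) - n * (c / (n+1)) := by
  rw [sum_sub_distrib, sum_const, card_erase_of_mem (mem_univ i), card_univ]
  simp [nsmul_eq_mul]

lemma pp_vcg_low (θ : Fin (n+1) → ℝ) (i : Fin (n+1))
    (h1 : ¬ c ≤ ∑ j, θ j)
    (h2 : ∑ j ∈ Finset.univ.erase i, θ j ≤ n * (c / (n+1))) :
    ppVCGi (n+1) c i θ = 0 := by
  unfold ppVCGi
  rw [if_neg h1]
  push_cast
  rw [pp_erase_sum θ i]
  have : (∑ j ∈ Finset.univ.erase i, θ j) - n * (c / (n+1)) ≤ 0 := by linarith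
  rw [max_eq_left this]
  ring

lemma pp_vcg_high (θ : Fin (n+1) → ℝ) (i : Fin (n+1))
    (h1 : c ≤ ∑ j, θ j)
    (h2 : n * (c / (n+1)) ≤ ∑ j ∈ Finset.univ.erase i, θ j) :
    ppVCGi (n+1) c i θ = 0 := by
  unfold ppVCGi
  rw [if_pos h1]
  push_cast
  rw [pp_erase_sum θ i]
  have : 0 ≤ (∑ j ∈ Finset.univ.erase i, θ j) - n * (c / (n+1)) := by linarith
  rw [max_eq_right this]
  ring

end

section
variable {n : ℕ} {c : ℝ}

lemma pp_nq_lt (hc : 0 < c) : (n:ℝ) * (c / (n+1)) < c := by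
  have hpos : (0:ℝ) < (n:ℝ) + 1 := by positivity
  rw [mul_div_assoc', div_lt_iff₀ hpos]
  nlinarith

lemma pp_V_zero_small (hc : 0 < c) (θ : Fin (n+1) → ℝ) (hbox : ∀ i, θ i ∈ Set.Icc 0 c)
    (hsum : ∑ j, θ j ≤ n * (c / (n+1))) :
    ∑ i, ppVCGi (n+1) c i θ = 0 := by
  refine sum_eq_zero fun i _ => pp_vcg_low θ i ?_ ?_
  · push_cast
    linarith [pp_nq_lt (n := n) hc]
  · have h1 : ∑ j ∈ Finset.univ.erase i, θ j = (∑ j, θ j) - θ i :=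
      sum_erase_eq_sub (mem_univ i)
    have h2 := (hbox i).1
    linarith

lemma pp_V_zero_c_high (hc : 0 < c) (θ : Fin (n+1) → ℝ) (hbox : ∀ i, θ i ∈ Set.Icc 0 c)
    (i₀ : Fin (n+1)) (hi₀ : θ i₀ = c)
    (hsum : n * (c / (n+1)) ≤ ∑ j ∈ Finset.univ.erase i₀, θ j) :
    ∑ i, ppVCGi (n+1) c i θ = 0 := by
  have hcsum : c ≤ ∑ j, θ j := by
    have := Finset.single_le_sum (f := θ) (fun j _ => (hbox j).1) (mem_univ i₀)
    linarith [hi₀ ▸ this]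
  refine sum_eq_zero fun i _ => pp_vcg_high θ i (by push_cast; exact hcsum) ?_
  push_cast
  by_cases h : i = i₀
  · exact h ▸ hsum
  · have hmem : i₀ ∈ Finset.univ.erase i := mem_erase.2 ⟨fun h' => h h'.symm, mem_univ i₀⟩
    have := Finset.single_le_sum (f := θ) (fun j _ => (hbox j).1) hmem
    linarith [(pp_nq_lt (n := n) hc).le, hi₀ ▸ this]

lemma pp_V_zero_two (hc : 0 < c) (θ : Fin (n+1) → ℝ) (hbox : ∀ i, θ i ∈ Set.Icc 0 c)
    (j k : Fin (n+1)) (hjk : j ≠ k) (hj : θ j = c) (hk : θ k = c) :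
    ∑ i, ppVCGi (n+1) c i θ = 0 := by
  refine pp_V_zero_c_high hc θ hbox j hj ?_
  have hmem : k ∈ Finset.univ.erase j := mem_erase.2 ⟨fun h' => hjk h'.symm, mem_univ k⟩
  have := Finset.single_le_sum (f := θ) (fun m hm => (hbox m).1) hmem
  linarith [(pp_nq_lt (n := n) hc).le, hk ▸ this]

end

lemma pp_key {n : ℕ} {c : ℝ} (hc : 0 < c) (r : Fin (n+1) → (Fin n → ℝ) → ℝ)
    (hfeas : ∀ θ : Fin (n+1) → ℝ, (∀ i, θ i ∈ Set.Icc 0 c) →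
      ∑ i : Fin (n+1), r i (θ ∘ i.succAbove) ≤ ∑ i : Fin (n+1), ppVCGi (n+1) c i θ)
    (hnneg : ∀ θ : Fin (n+1) → ℝ, (∀ i, θ i ∈ Set.Icc 0 c) →
      0 ≤ ∑ i : Fin (n+1), r i (θ ∘ i.succAbove)) :
    ∀ θ : Fin (n+1) → ℝ, (∀ i, θ i ∈ Set.Icc 0 c) →
      ∑ i : Fin (n+1), r i (θ ∘ i.succAbove) = 0 := by
  -- F = 0 whenever V = 0
  have hF0 : ∀ θ : Fin (n+1) → ℝ, (∀ i, θ i ∈ Set.Icc 0 c) →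
      (∑ i : Fin (n+1), ppVCGi (n+1) c i θ = 0) →
      ∑ i : Fin (n+1), r i (θ ∘ i.succAbove) = 0 := by
    intro θ hb hV
    exact le_antisymm (hV ▸ hfeas θ hb) (hnneg θ hb)
  -- mixes stay in the box
  have hboxmix : ∀ (S : Finset (Fin (n+1))) (θ η : Fin (n+1) → ℝ),
      (∀ i, θ i ∈ Set.Icc 0 c) → (∀ i, η i ∈ Set.Icc 0 c) →
      ∀ i, ppMix S θ η i ∈ Set.Icc 0 c := by
    intro S θ η hθ hη i
    unfold ppMix
    split
    · exact hη i
    · exact hθ i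
  -- F = 0 whenever two distinct coordinates equal c
  have hF2c : ∀ θ : Fin (n+1) → ℝ, (∀ i, θ i ∈ Set.Icc 0 c) →
      ∀ j k : Fin (n+1), j ≠ k → θ j = c → θ k = c →
      ∑ i : Fin (n+1), r i (θ ∘ i.succAbove) = 0 := by
    intro θ hb j k hjk hj hk
    exact hF0 θ hb (pp_V_zero_two hc θ hb j k hjk hj hk)
  -- Step A: F = 0 on the hyperplane θ i₀ = c, when the rest is small
  have stepA : ∀ θ : Fin (n+1) → ℝ, (∀ i, θ i ∈ Set.Icc 0 c) →
      ∀ i₀ : Fin (n+1), θ i₀ = c →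
      (∑ j ∈ Finset.univ.erase i₀, θ j) ≤ n * (c / (n+1)) →
      ∑ i : Fin (n+1), r i (θ ∘ i.succAbove) = 0 := by
    intro θ hb i₀ hic hsum
    set η : Fin (n+1) → ℝ := fun j => if j = i₀ then 0 else c with hη
    have hηbox : ∀ i, η i ∈ Set.Icc 0 c := by
      intro i
      by_cases h : i = i₀ <;> simp [hη, h, hc.le]
    have hid := ppF_id r θ η
    rw [show (univ : Finset (Fin (n+1))) = insert i₀ (univ.erase i₀) from
          (insert_erase (mem_univ i₀)).symm,
        sum_powerset_insert (notMem_erase i₀ univ), ← sum_add_distrib,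
        ← Finset.add_sum_erase _ _ (empty_mem_powerset (univ.erase i₀))] at hid
    simp only [insert_erase (mem_univ i₀)] at hid
    -- compute the ∅ term
    have hmix0 : ppMix (∅ : Finset (Fin (n+1))) θ η = θ := by
      funext j; simp [ppMix]
    have hmixsing : ∑ i : Fin (n+1), r i (ppMix (insert i₀ ∅) θ η ∘ i.succAbove) = 0 := by
      refine hF0 _ (hboxmix _ _ _ hb hηbox) (pp_V_zero_small hc _ (hboxmix _ _ _ hb hηbox) ?_)
      have hsum' : ∑ j, ppMix (insert i₀ ∅) θ η j = ∑ j ∈ Finset.univ.erase i₀, θ j := by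
        rw [← Finset.sum_erase_add univ _ (mem_univ i₀)]
        have h1 : ppMix (insert i₀ ∅) θ η i₀ = 0 := by simp [ppMix, hη]
        rw [h1, add_zero]
        refine sum_congr rfl fun j hj => ?_
        have hji : j ≠ i₀ := (mem_erase.1 hj).1
        simp [ppMix, hji]
      rw [hsum']
      exact hsum
    -- tail terms are nonnegative
    have htail : ∀ T ∈ ((univ.erase i₀).powerset).erase ∅,
        0 ≤ (-1:ℝ)^T.card * ∑ i : Fin (n+1), r i (ppMix T θ η ∘ i.succAbove)
            + (-1:ℝ)^(insert i₀ T).card *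
              ∑ i : Fin (n+1), r i (ppMix (insert i₀ T) θ η ∘ i.succAbove) := by
      intro T hT
      obtain ⟨hT0, hTP⟩ := mem_erase.1 hT
      have hTsub : T ⊆ univ.erase i₀ := mem_powerset.1 hTP
      have hiT : i₀ ∉ T := fun h => (notMem_erase i₀ univ) (hTsub h)
      obtain ⟨j, hjT⟩ := Finset.nonempty_iff_ne_empty.2 hT0
      have hji : j ≠ i₀ := (mem_erase.1 (hTsub hjT)).1
      -- first term is zero : coordinates i₀ and j both equal c
      have hfT : ∑ i : Fin (n+1), r i (ppMix T θ η ∘ i.succAbove) = 0 := by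
        refine hF2c _ (hboxmix _ _ _ hb hηbox) i₀ j (fun h => hji h.symm) ?_ ?_
        · simp [ppMix, hiT, hic]
        · simp [ppMix, hjT, hη, hji]
      rw [hfT, mul_zero, zero_add]
      by_cases h2 : ∃ k ∈ T, k ≠ j
      · obtain ⟨k, hkT, hkj⟩ := h2
        have hki : k ≠ i₀ := (mem_erase.1 (hTsub hkT)).1
        have : ∑ i : Fin (n+1), r i (ppMix (insert i₀ T) θ η ∘ i.succAbove) = 0 := by
          refine hF2c _ (hboxmix _ _ _ hb hηbox) j k hkj.symm ?_ ?_
          · simp [ppMix, mem_insert, hjT, hη, hji]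
          · simp [ppMix, mem_insert, hkT, hη, hki]
        rw [this, mul_zero]
      · push_neg at h2
        have hTj : T = {j} := by
          refine Finset.eq_singleton_iff_unique_mem.2 ⟨hjT, fun k hk => h2 k hk⟩
        have hcard : (insert i₀ T).card = 2 := by
          rw [card_insert_of_notMem hiT, hTj, card_singleton]
        rw [hcard]
        have := hnneg _ (hboxmix (insert i₀ T) _ _ hb hηbox)
        nlinarith [this]
    -- conclude
    have h1 : (-1:ℝ)^(∅ : Finset (Fin (n+1))).card *
          ∑ i : Fin (n+1), r i (ppMix ∅ θ η ∘ i.succAbove)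
        + (-1:ℝ)^(insert i₀ (∅ : Finset (Fin (n+1)))).card *
          ∑ i : Fin (n+1), r i (ppMix (insert i₀ ∅) θ η ∘ i.succAbove)
        = ∑ i : Fin (n+1), r i (θ ∘ i.succAbove) := by
      rw [hmixsing, hmix0]
      simp
    rw [h1] at hid
    have htail' : 0 ≤ ∑ T ∈ ((univ.erase i₀).powerset).erase ∅,
        ((-1:ℝ)^T.card * ∑ i : Fin (n+1), r i (ppMix T θ η ∘ i.succAbove)
          + (-1:ℝ)^(insert i₀ T).card *
            ∑ i : Fin (n+1), r i (ppMix (insert i₀ T) θ η ∘ i.succAbove)) :=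
      sum_nonneg htail
    have := hnneg θ hb
    linarith
  -- Step A + B : F = 0 whenever some coordinate equals c
  have hplane : ∀ θ : Fin (n+1) → ℝ, (∀ i, θ i ∈ Set.Icc 0 c) →
      ∀ i₀ : Fin (n+1), θ i₀ = c →
      ∑ i : Fin (n+1), r i (θ ∘ i.succAbove) = 0 := by
    intro θ hb i₀ hic
    rcases le_total (∑ j ∈ Finset.univ.erase i₀, θ j) (n * (c / (n+1))) with h | h
    · exact stepA θ hb i₀ hic h
    · exact hF0 θ hb (pp_V_zero_c_high hc θ hb i₀ hic h)
  -- Step C : conclude via the identity with η ≡ c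
  intro θ hb
  have hid := ppF_id r θ (fun _ => c)
  rw [← Finset.add_sum_erase _ _ (empty_mem_powerset (univ : Finset (Fin (n+1))))] at hid
  have hmix0 : ppMix (∅ : Finset (Fin (n+1))) θ (fun _ => c) = θ := by
    funext j; simp [ppMix]
  have hz : ∀ S ∈ ((univ : Finset (Fin (n+1))).powerset).erase ∅,
      (-1:ℝ)^S.card * ∑ i : Fin (n+1), r i (ppMix S θ (fun _ => c) ∘ i.succAbove) = 0 := by
    intro S hS
    obtain ⟨hS0, _⟩ := mem_erase.1 hS
    obtain ⟨j, hjS⟩ := Finset.nonempty_iff_ne_empty.2 hS0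
    have hcbox : ∀ i, (fun _ : Fin (n+1) => c) i ∈ Set.Icc 0 c := fun i => ⟨hc.le, le_refl c⟩
    have : ∑ i : Fin (n+1), r i (ppMix S θ (fun _ => c) ∘ i.succAbove) = 0 := by
      refine hplane _ (hboxmix _ _ _ hb hcbox) j ?_
      simp [ppMix, hjS]
    rw [this, mul_zero]
  rw [Finset.sum_eq_zero hz, add_zero, hmix0] at hid
  simpa using hid

theorem stmt_16 {n : ℕ} (hn : 1 ≤ n) (c : ℝ) (hc : 0 < c) :
    ¬ ∃ r : Fin (n+1) → (Fin n → ℝ) → ℝ,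
      (∀ θ : Fin (n+1) → ℝ, (∀ i, θ i ∈ Set.Icc 0 c) →
        ∑ i : Fin (n+1), r i (θ ∘ i.succAbove) ≤
          ∑ i : Fin (n+1), ppVCGi (n+1) c i θ) ∧
      (∀ θ : Fin (n+1) → ℝ, (∀ i, θ i ∈ Set.Icc 0 c) →
        0 ≤ ∑ i : Fin (n+1), r i (θ ∘ i.succAbove)) ∧
      (∃ θ : Fin (n+1) → ℝ, (∀ i, θ i ∈ Set.Icc 0 c) ∧
        0 < ∑ i : Fin (n+1), r i (θ ∘ i.succAbove)) := by
  rintro ⟨r, hfeas, hnneg, θs, hbs, hpos⟩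
  have := pp_key hc r hfeas hnneg θs hbs
  linarith
end

section
/- In the public project problem with equal participation costs, for a pay-only Groves mechanism r = (r_1,…,r_n) the following are equivalent: (1) r is individually undominated among non-deficit Groves mechanisms; (2) r_i(θ_{-i}) = 0 for all i and θ_{-i}, i.e., r is the VCG mechanism; (3) r is collectively undominated among non-deficit Groves mechanisms. -/
namespace PP18
open Finset
open scoped Classical

variable {n m : ℕ} {c : ℝ}

/-- All components in `[0,c]`. -/
def box {m : ℕ} (c : ℝ) (θ : Fin m → ℝ) : Prop := ∀ j, θ j ∈ Set.Icc 0 c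

/-- Zero-surplus condition. -/
def Zc (n : ℕ) (c : ℝ) (θ : Fin (n+1) → ℝ) : Prop :=
  (c ≤ ∑ j, θ j ∧ ∀ j, c - c/(n+1) ≤ (∑ j, θ j) - θ j) ∨
  ((∑ j, θ j) < c ∧ ∀ j, (∑ j, θ j) - θ j ≤ c - c/(n+1))

noncomputable def sig (c : ℝ) {m : ℕ} (θ : Fin m → ℝ) : Fin m → ℝ :=
  fun j => if θ j = 0 then c else 0

noncomputable def mix (c : ℝ) {m : ℕ} (θ : Fin m → ℝ) (A : Finset (Fin m)) : Fin m → ℝ :=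
  fun j => if j ∈ A then sig c θ j else θ j

noncomputable def Ee (c : ℝ) {m : ℕ} (θ : Fin m → ℝ) : Finset (Fin m) :=
  univ.filter (fun j => θ j = 0 ∨ θ j = c)

noncomputable def Ff (c : ℝ) {m : ℕ} (θ : Fin m → ℝ) : Finset (Fin m) :=
  univ.filter (fun j => ¬(θ j = 0 ∨ θ j = c))

noncomputable def Ezero (c : ℝ) {m : ℕ} (θ : Fin m → ℝ) : Finset (Fin m) :=
  univ.filter (fun j => θ j = 0)

noncomputable def Ec (c : ℝ) {m : ℕ} (θ : Fin m → ℝ) : Finset (Fin m) :=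
  univ.filter (fun j => θ j = c)

noncomputable def Cc (c : ℝ) {m : ℕ} (θ : Fin m → ℝ) (A : Finset (Fin m)) : Finset (Fin m) :=
  univ.filter (fun j => mix c θ A j = c)

lemma erase_sum (θ : Fin (n+1) → ℝ) (i : Fin (n+1)) :
    ∑ j ∈ Finset.univ.erase i, (θ j - c / (n+1:ℕ)) =
      (∑ j, θ j) - θ i - (c - c/(n+1)) := by
  rw [Finset.sum_sub_distrib, Finset.sum_erase_eq_sub (Finset.mem_univ i),
    Finset.sum_const, Finset.card_erase_of_mem (Finset.mem_univ i)]
  have h1 : (Finset.univ : Finset (Fin (n+1))).card = n + 1 := by simp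
  rw [h1]
  have h2 : ((n:ℝ)+1) ≠ 0 := by positivity
  have h3 : (n + 1 - 1 : ℕ) • (c / ((n+1:ℕ):ℝ)) = c - c/((n:ℝ)+1) := by
    simp only [Nat.add_sub_cancel, nsmul_eq_mul]
    push_cast
    field_simp
    ring
  rw [h3]

lemma vcg_nonneg (i : Fin (n+1)) (θ : Fin (n+1) → ℝ) : 0 ≤ ppVCGi (n+1) c i θ := by
  unfold ppVCGi
  by_cases h : c ≤ ∑ j, θ j
  · simp only [h, if_pos, one_mul]
    have := le_max_right (0:ℝ) (∑ j ∈ Finset.univ.erase i, (θ j - c / (n+1:ℕ)))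
    linarith
  · simp only [h, if_neg, not_false_iff, zero_mul, sub_zero]
    exact le_max_left _ _

lemma vcg_zero (i : Fin (n+1)) (θ : Fin (n+1) → ℝ) (hZ : Zc n c θ) :
    ppVCGi (n+1) c i θ = 0 := by
  unfold ppVCGi
  rw [erase_sum]
  rcases hZ with ⟨h1, h2⟩ | ⟨h1, h2⟩
  · rw [if_pos h1, one_mul]
    have := h2 i
    have hnn : 0 ≤ (∑ j, θ j) - θ i - (c - c/(n+1)) := by linarith
    rw [max_eq_right hnn]
    ring
  · rw [if_neg (not_le.mpr h1), zero_mul]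
    have := h2 i
    have hnp : (∑ j, θ j) - θ i - (c - c/(n+1)) ≤ 0 := by linarith
    rw [max_eq_left hnp]
    ring

/-- extension lemma: any x in the box extends to a full profile satisfying `Zc`. -/
lemma exists_ext (hc : 0 < c) (i : Fin (n+1)) (x : Fin n → ℝ) (hx : box c x) :
    ∃ θ : Fin (n+1) → ℝ, box c θ ∧ θ ∘ i.succAbove = x ∧ Zc n c θ := by
  by_cases hS : c - c/(n+1) ≤ ∑ k, x k
  · refine ⟨i.insertNth c x, ?_, ?_, ?_⟩
    · intro j
      by_cases hj : j = i
      · subst hj; simp only [Fin.insertNth_apply_same]; exact ⟨hc.le, le_rfl⟩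
      · obtain ⟨k, rfl⟩ := Fin.exists_succAbove_eq hj
        simp only [Fin.insertNth_apply_succAbove]
        exact hx k
    · funext k; simp
    · have hsum : ∑ j, (i.insertNth c x : Fin (n+1) → ℝ) j = c + ∑ k, x k := by
        rw [Fin.sum_univ_succAbove _ i]; simp
      have hXnn : 0 ≤ ∑ k, x k := Finset.sum_nonneg fun k _ => (hx k).1
      left
      constructor
      · rw [hsum]; linarith
      · intro j
        rw [hsum]
        have hle : (i.insertNth c x : Fin (n+1) → ℝ) j ≤ c := by
          by_cases hj : j = i
          · subst hj; simp
          · obtain ⟨k, rfl⟩ := Fin.exists_succAbove_eq hj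
            simp only [Fin.insertNth_apply_succAbove]; exact (hx k).2
        linarith
  · push_neg at hS
    refine ⟨i.insertNth 0 x, ?_, ?_, ?_⟩
    · intro j
      by_cases hj : j = i
      · subst hj; simp only [Fin.insertNth_apply_same]; exact ⟨le_rfl, hc.le⟩
      · obtain ⟨k, rfl⟩ := Fin.exists_succAbove_eq hj
        simp only [Fin.insertNth_apply_succAbove]
        exact hx k
    · funext k; simp
    · have hsum : ∑ j, (i.insertNth 0 x : Fin (n+1) → ℝ) j = ∑ k, x k := by
        rw [Fin.sum_univ_succAbove _ i]; simp
      have hcN : 0 < c/(n+1) := by positivity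
      right
      constructor
      · rw [hsum]; linarith
      · intro j
        rw [hsum]
        have hge : 0 ≤ (i.insertNth 0 x : Fin (n+1) → ℝ) j := by
          by_cases hj : j = i
          · subst hj; simp
          · obtain ⟨k, rfl⟩ := Fin.exists_succAbove_eq hj
            simp only [Fin.insertNth_apply_succAbove]; exact (hx k).1
        linarith

lemma mix_empty (θ : Fin m → ℝ) : mix c θ ∅ = θ := by
  funext j; simp [mix]

lemma mix_box {θ : Fin m → ℝ} (hc : 0 < c) (hθ : box c θ) (A : Finset (Fin m)) :
    box c (mix c θ A) := by
  intro j
  unfold mix sig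
  by_cases hA : j ∈ A
  · simp only [hA, if_pos]
    by_cases h0 : θ j = 0
    · simp only [h0, if_pos]; exact ⟨hc.le, le_rfl⟩
    · simp only [h0, if_neg, not_false_iff]; exact ⟨le_rfl, hc.le⟩
  · simp only [hA, if_neg, not_false_iff]
    exact hθ j

/-- the inclusion–exclusion identity. -/
lemma id1 (u : Fin (n+1) → (Fin n → ℝ) → ℝ) (θ : Fin (n+1) → ℝ) :
    ∑ A ∈ (univ : Finset (Fin (n+1))).powerset,
      (-1:ℝ)^A.card * ∑ i, u i (mix c θ A ∘ i.succAbove) = 0 := by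
  simp_rw [Finset.mul_sum]
  rw [Finset.sum_comm]
  apply Finset.sum_eq_zero
  intro i _
  have hu : (univ : Finset (Fin (n+1))) = insert i (univ.erase i) :=
    (Finset.insert_erase (Finset.mem_univ i)).symm
  rw [hu, Finset.sum_powerset_insert (Finset.notMem_erase i _)]
  have hkey : ∀ B ∈ (univ.erase i).powerset,
      (-1:ℝ)^(insert i B).card * u i (mix c θ (insert i B) ∘ i.succAbove)
      = -((-1:ℝ)^B.card * u i (mix c θ B ∘ i.succAbove)) := by
    intro B hB
    have hiB : i ∉ B := fun h =>
      (Finset.notMem_erase i univ) ((Finset.mem_powerset.mp hB) h)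
    have hcard : (insert i B).card = B.card + 1 := Finset.card_insert_of_notMem hiB
    have harg : (mix c θ (insert i B) ∘ i.succAbove) = (mix c θ B ∘ i.succAbove) := by
      funext k
      simp only [Function.comp_apply, mix]
      have hne : i.succAbove k ≠ i := Fin.succAbove_ne i k
      by_cases h : i.succAbove k ∈ B
      · rw [if_pos h, if_pos (Finset.mem_insert_of_mem h)]
      · rw [if_neg h, if_neg (fun hmem => by
          rcases Finset.mem_insert.mp hmem with h' | h'
          · exact hne h'
          · exact h h')]
    rw [hcard, harg, pow_succ]
    ring
  rw [Finset.sum_congr rfl hkey, Finset.sum_neg_distrib]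
  ring

lemma mem_Cc_iff (hc : 0 < c) {θ : Fin m → ℝ} {A : Finset (Fin m)} (j : Fin m) :
    j ∈ Cc c θ A ↔ ((j ∈ A ∧ θ j = 0) ∨ (j ∉ A ∧ θ j = c)) := by
  unfold Cc mix sig
  simp only [Finset.mem_filter, Finset.mem_univ, true_and]
  by_cases hA : j ∈ A
  · simp only [hA, if_pos, true_and, not_true, false_and, or_false]
    by_cases h0 : θ j = 0
    · simp [h0]
    · simp [h0]; exact fun h => absurd h.symm (ne_of_gt hc)
  · simp [hA]

lemma Cc_empty (hc : 0 < c) (θ : Fin m → ℝ) : Cc c θ ∅ = Ec c θ := by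
  ext j
  rw [mem_Cc_iff hc]
  simp [Ec]

lemma mix_extreme (hc : 0 < c) {θ : Fin m → ℝ} {A : Finset (Fin m)} {j : Fin m}
    (hj : j ∈ Ee c θ) (hnc : mix c θ A j ≠ c) : mix c θ A j = 0 := by
  unfold Ee at hj
  rw [Finset.mem_filter] at hj
  unfold mix sig at *
  by_cases hA : j ∈ A
  · simp only [hA, if_pos] at *
    by_cases h0 : θ j = 0
    · exact absurd (if_pos h0) hnc
    · exact if_neg h0
  · simp only [hA, if_neg, not_false_iff] at *
    rcases hj.2 with h | h
    · exact h
    · exact absurd h hnc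

lemma Cc_subset (hc : 0 < c) {θ : Fin m → ℝ} {A : Finset (Fin m)} (hA : A ⊆ Ee c θ) :
    Cc c θ A ⊆ Ee c θ := by
  intro j hj
  rw [mem_Cc_iff hc] at hj
  unfold Ee
  rw [Finset.mem_filter]
  rcases hj with ⟨_, h⟩ | ⟨_, h⟩
  · exact ⟨Finset.mem_univ j, Or.inl h⟩
  · exact ⟨Finset.mem_univ j, Or.inr h⟩

lemma mix_sum (hc : 0 < c) {θ : Fin m → ℝ} {A : Finset (Fin m)} (hA : A ⊆ Ee c θ) :
    ∑ j, mix c θ A j = (∑ j ∈ Ff c θ, θ j) + ((Cc c θ A).card : ℝ) * c := by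
  rw [← Finset.sum_filter_add_sum_filter_not univ (fun j => θ j = 0 ∨ θ j = c) (mix c θ A)]
  have hF : ∑ j ∈ univ.filter (fun j => ¬(θ j = 0 ∨ θ j = c)), mix c θ A j
      = ∑ j ∈ Ff c θ, θ j := by
    apply Finset.sum_congr rfl
    intro j hj
    have hjE : j ∉ A := by
      intro hin
      have := hA hin
      unfold Ee at this
      rw [Finset.mem_filter] at this hj
      exact hj.2 this.2
    unfold mix
    rw [if_neg hjE]
  have hE : ∑ j ∈ univ.filter (fun j => θ j = 0 ∨ θ j = c), mix c θ A j
      = ((Cc c θ A).card : ℝ) * c := by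
    have h1 : ∀ j ∈ univ.filter (fun j => θ j = 0 ∨ θ j = c),
        mix c θ A j = if mix c θ A j = c then c else 0 := by
      intro j hj
      by_cases h : mix c θ A j = c
      · rw [if_pos h, h]
      · rw [if_neg h]; exact mix_extreme hc hj h
    rw [Finset.sum_congr rfl h1, ← Finset.sum_filter]
    have h2 : (univ.filter (fun j => θ j = 0 ∨ θ j = c)).filter
        (fun j => mix c θ A j = c) = Cc c θ A := by
      ext j
      simp only [Finset.mem_filter, Finset.mem_univ, true_and]
      constructor
      · exact fun h => by unfold Cc; rw [Finset.mem_filter]; exact ⟨Finset.mem_univ j, h.2⟩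
      · intro h
        have h' := h
        unfold Cc at h'
        rw [Finset.mem_filter] at h'
        have := Cc_subset hc hA h
        unfold Ee at this
        rw [Finset.mem_filter] at this
        exact ⟨this.2, h'.2⟩
    rw [h2, Finset.sum_const, nsmul_eq_mul]
  rw [hF, hE]; ring

lemma card_parity (hc : 0 < c) {θ : Fin m → ℝ} {A : Finset (Fin m)} (hA : A ⊆ Ee c θ) :
    (Cc c θ A).card + A.card = 2 * (A ∩ Ezero c θ).card + (Ec c θ).card := by
  have hCc : Cc c θ A = (A ∩ Ezero c θ) ∪ (Ec c θ \ A) := by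
    ext j
    rw [mem_Cc_iff hc]
    simp only [Finset.mem_union, Finset.mem_inter, Finset.mem_sdiff]
    unfold Ezero Ec
    simp only [Finset.mem_filter, Finset.mem_univ, true_and]
    tauto
  have hdisj : Disjoint (A ∩ Ezero c θ) (Ec c θ \ A) := by
    rw [Finset.disjoint_left]
    intro j hj hj'
    exact (Finset.mem_sdiff.mp hj').2 (Finset.mem_inter.mp hj).1
  have h1 : (Cc c θ A).card = (A ∩ Ezero c θ).card + (Ec c θ \ A).card := by
    rw [hCc, Finset.card_union_of_disjoint hdisj]
  have h2 : (Ec c θ \ A).card + (Ec c θ ∩ A).card = (Ec c θ).card :=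
    Finset.card_sdiff_add_card_inter _ _
  have h3 : A.card = (A ∩ Ezero c θ).card + (A ∩ Ec c θ).card := by
    have hA2 : A = (A ∩ Ezero c θ) ∪ (A ∩ Ec c θ) := by
      ext j
      simp only [Finset.mem_union, Finset.mem_inter]
      unfold Ezero Ec
      simp only [Finset.mem_filter, Finset.mem_univ, true_and]
      constructor
      · intro hj
        have := hA hj
        unfold Ee at this
        rw [Finset.mem_filter] at this
        rcases this.2 with h | h
        · exact Or.inl ⟨hj, h⟩
        · exact Or.inr ⟨hj, h⟩
      · rintro (⟨h, _⟩ | ⟨h, _⟩) <;> exact h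
    have hd : Disjoint (A ∩ Ezero c θ) (A ∩ Ec c θ) := by
      rw [Finset.disjoint_left]
      intro j hj hj'
      simp only [Ezero, Ec, Finset.mem_inter, Finset.mem_filter, Finset.mem_univ,
        true_and] at hj hj'
      exact absurd (hj.2 ▸ hj'.2.symm) (ne_of_gt hc)
    conv_lhs => rw [hA2]
    rw [Finset.card_union_of_disjoint hd]
  have h4 : (A ∩ Ec c θ).card = (Ec c θ ∩ A).card := by rw [Finset.inter_comm]
  omega

lemma sign_lemma (hc : 0 < c) {θ : Fin m → ℝ} {A : Finset (Fin m)} (hA : A ⊆ Ee c θ) :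
    ((-1:ℝ))^A.card = (-1)^((Ec c θ).card) * (-1)^((Cc c θ A).card) := by
  have h := card_parity hc hA
  have h1 : ((-1:ℝ))^((Cc c θ A).card + A.card) = (-1)^((Ec c θ).card) := by
    rw [h, pow_add, pow_mul]
    norm_num
  have h2 : ((-1:ℝ))^A.card * (-1)^((Cc c θ A).card)
      = (-1)^((Ec c θ).card) := by rw [← pow_add, add_comm]; exact h1
  have h4 : ((-1:ℝ)^((Cc c θ A).card))^2 = 1 := by
    rw [← pow_mul, mul_comm, pow_mul]; norm_num
  calc ((-1:ℝ))^A.card = (-1)^A.card * ((-1)^((Cc c θ A).card))^2 := by rw [h4, mul_one]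
    _ = ((-1)^A.card * (-1)^((Cc c θ A).card)) * (-1)^((Cc c θ A).card) := by ring
    _ = (-1)^((Ec c θ).card) * (-1)^((Cc c θ A).card) := by rw [h2]

lemma eq_Ec_of_Cc_empty (hc : 0 < c) {θ : Fin m → ℝ} {A : Finset (Fin m)}
    (hA : A ⊆ Ee c θ) (h : Cc c θ A = ∅) : A = Ec c θ := by
  ext j
  have hj := (Finset.notMem_empty j)
  rw [← h, mem_Cc_iff hc] at hj
  push_neg at hj
  unfold Ec
  simp only [Finset.mem_filter, Finset.mem_univ, true_and]
  constructor
  · intro hjA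
    have := hA hjA
    unfold Ee at this
    rw [Finset.mem_filter] at this
    rcases this.2 with h0 | h0
    · exact absurd h0 (hj.1 hjA)
    · exact h0
  · intro hjc
    by_contra hjA
    exact (hj.2 hjA) hjc

lemma Zc_mix_two (hc : 0 < c) {θ : Fin (n+1) → ℝ} (hθ : box c θ) {A : Finset (Fin (n+1))}
    (hA : A ⊆ Ee c θ) (hk : 2 ≤ (Cc c θ A).card) : Zc n c (mix c θ A) := by
  have hT := mix_sum hc hA
  have hX : 0 ≤ ∑ j ∈ Ff c θ, θ j := Finset.sum_nonneg fun j _ => (hθ j).1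
  have hk' : (2:ℝ) ≤ ((Cc c θ A).card : ℝ) := by exact_mod_cast hk
  have hcN : 0 ≤ c/(n+1) ∧ c/(n+1) ≤ c := by
    constructor
    · positivity
    · rw [div_le_iff₀ (by positivity)]
      nlinarith [Nat.cast_nonneg (α := ℝ) n]
  left
  constructor
  · rw [hT]; nlinarith
  · intro j
    rw [hT]
    have hub : mix c θ A j ≤ c := (mix_box hc hθ A j).2
    nlinarith

lemma Zc_mix_one (hc : 0 < c) {θ : Fin (n+1) → ℝ} (hθ : box c θ) {A : Finset (Fin (n+1))}
    (hA : A ⊆ Ee c θ) (hk : (Cc c θ A).card = 1)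
    (hX : c - c/(n+1) ≤ ∑ j ∈ Ff c θ, θ j) : Zc n c (mix c θ A) := by
  have hT := mix_sum hc hA
  rw [hk] at hT
  have hX0 : 0 ≤ ∑ j ∈ Ff c θ, θ j := Finset.sum_nonneg fun j _ => (hθ j).1
  push_cast at hT
  left
  constructor
  · rw [hT]; linarith
  · intro j
    rw [hT]
    have hub : mix c θ A j ≤ c := (mix_box hc hθ A j).2
    linarith

lemma Zc_mix_zero (hc : 0 < c) {θ : Fin (n+1) → ℝ} (hθ : box c θ) {A : Finset (Fin (n+1))}
    (hA : A ⊆ Ee c θ) (hk : (Cc c θ A).card = 0)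
    (hX : (∑ j ∈ Ff c θ, θ j) < c - c/(n+1)) : Zc n c (mix c θ A) := by
  have hT := mix_sum hc hA
  rw [hk] at hT
  push_cast at hT
  rw [zero_mul, add_zero] at hT
  have hcN : 0 < c/(n+1) := by positivity
  right
  constructor
  · rw [hT]; linarith
  · intro j
    rw [hT]
    have hlb : 0 ≤ mix c θ A j := (mix_box hc hθ A j).1
    linarith

lemma Ec_subset_Ee : Ec c θ ⊆ Ee c θ := by
  intro j hj
  unfold Ec at hj
  unfold Ee
  rw [Finset.mem_filter] at hj ⊢
  exact ⟨hj.1, Or.inr hj.2⟩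

/-- The key step: inclusion–exclusion + parity argument. -/
lemma key_step (hc : 0 < c) (u : Fin (n+1) → (Fin n → ℝ) → ℝ)
    (h0 : ∀ θ : Fin (n+1) → ℝ, box c θ → 0 ≤ ∑ i, u i (θ ∘ i.succAbove))
    (hZ : ∀ θ : Fin (n+1) → ℝ, box c θ → Zc n c θ → ∑ i, u i (θ ∘ i.succAbove) = 0)
    (θ : Fin (n+1) → ℝ) (hθ : box c θ)
    (IH : ∀ θ' : Fin (n+1) → ℝ, box c θ' → (Ff c θ').card < (Ff c θ).card →
      ∑ i, u i (θ' ∘ i.succAbove) = 0) :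
    ∑ i, u i (θ ∘ i.succAbove) = 0 := by
  have hid : ∑ A ∈ (Ee c θ).powerset,
      (-1:ℝ)^A.card * ∑ i, u i (mix c θ A ∘ i.succAbove) = 0 := by
    rw [Finset.sum_subset (Finset.powerset_mono.mpr (Finset.subset_univ _))]
    · exact id1 u θ
    · intro A hA hnA
      have : ¬ A ⊆ Ee c θ := fun h => hnA (Finset.mem_powerset.mpr h)
      obtain ⟨a, haA, haE⟩ := Finset.not_subset.mp this
      have haF : a ∈ Ff c θ := by
        unfold Ff
        unfold Ee at haE
        rw [Finset.mem_filter] at haE ⊢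
        refine ⟨Finset.mem_univ a, ?_⟩
        intro hor
        exact haE ⟨Finset.mem_univ a, hor⟩
      have hsub : Ff c (mix c θ A) ⊆ (Ff c θ).erase a := by
        intro j hj
        unfold Ff at hj
        rw [Finset.mem_filter] at hj
        have hjA : j ∉ A := by
          intro hjA
          apply hj.2
          unfold mix sig
          rw [if_pos hjA]
          by_cases h0' : θ j = 0
          · rw [if_pos h0']; right; rfl
          · rw [if_neg h0']; left; rfl
        have hmixj : mix c θ A j = θ j := by unfold mix; rw [if_neg hjA]
        rw [Finset.mem_erase]
        constructor
        · intro hja; exact hjA (hja ▸ haA)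
        · unfold Ff
          rw [Finset.mem_filter]
          exact ⟨Finset.mem_univ j, hmixj ▸ hj.2⟩
      have hlt : (Ff c (mix c θ A)).card < (Ff c θ).card := by
        have h1 := Finset.card_le_card hsub
        have h2 : ((Ff c θ).erase a).card = (Ff c θ).card - 1 :=
          Finset.card_erase_of_mem haF
        have h3 : 0 < (Ff c θ).card := Finset.card_pos.mpr ⟨a, haF⟩
        omega
      rw [IH (mix c θ A) (mix_box hc hθ A) hlt, mul_zero]
  by_cases hX : c - c/(n+1) ≤ ∑ j ∈ Ff c θ, θ j
  · -- case X ≥ γ : only the A = Ec term can survive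
    have hEcmem : Ec c θ ∈ (Ee c θ).powerset := Finset.mem_powerset.mpr Ec_subset_Ee
    have hsingle : ∑ A ∈ (Ee c θ).powerset,
        (-1:ℝ)^A.card * ∑ i, u i (mix c θ A ∘ i.succAbove)
        = (-1:ℝ)^(Ec c θ).card * ∑ i, u i (mix c θ (Ec c θ) ∘ i.succAbove) := by
      apply Finset.sum_eq_single_of_mem _ hEcmem
      intro A hA hne
      have hAe : A ⊆ Ee c θ := Finset.mem_powerset.mp hA
      have hk : (Cc c θ A).card = 1 ∨ 2 ≤ (Cc c θ A).card := by
        rcases Nat.eq_zero_or_pos (Cc c θ A).card with h | h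
        · exact absurd (eq_Ec_of_Cc_empty hc hAe (Finset.card_eq_zero.mp h)) hne
        · omega
      have hZc : Zc n c (mix c θ A) := by
        rcases hk with hk | hk
        · exact Zc_mix_one hc hθ hAe hk hX
        · exact Zc_mix_two hc hθ hAe hk
      rw [hZ _ (mix_box hc hθ A) hZc, mul_zero]
    rw [hsingle] at hid
    have hmixEc : ∑ i, u i (mix c θ (Ec c θ) ∘ i.succAbove) = 0 := by
      have hne : ((-1:ℝ))^(Ec c θ).card ≠ 0 := pow_ne_zero _ (by norm_num)
      exact (mul_eq_zero.mp hid).resolve_left hne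
    by_cases hEc0 : Ec c θ = ∅
    · rw [hEc0, mix_empty] at hmixEc
      exact hmixEc
    · apply hZ θ hθ
      have hk : 1 ≤ (Ec c θ).card :=
        Finset.card_pos.mpr (Finset.nonempty_of_ne_empty hEc0)
      have hCce : (Cc c θ ∅).card = (Ec c θ).card := by rw [Cc_empty hc]
      have hZc : Zc n c (mix c θ ∅) := by
        rcases Nat.lt_or_ge (Ec c θ).card 2 with h | h
        · exact Zc_mix_one hc hθ (Finset.empty_subset _) (by omega) hX
        · exact Zc_mix_two hc hθ (Finset.empty_subset _) (by omega)
      rwa [mix_empty] at hZc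
  · -- case X < γ : only k = 1 terms can survive, and they all have the same sign
    push_neg at hX
    have hterm : ∀ A ∈ (Ee c θ).powerset,
        (-1:ℝ)^A.card * ∑ i, u i (mix c θ A ∘ i.succAbove) ≠ 0 →
        (Cc c θ A).card = 1 := by
      intro A hA hne
      have hAe : A ⊆ Ee c θ := Finset.mem_powerset.mp hA
      by_contra hk1
      have hk : (Cc c θ A).card = 0 ∨ 2 ≤ (Cc c θ A).card := by omega
      apply hne
      have hZc : Zc n c (mix c θ A) := by
        rcases hk with hk | hk
        · exact Zc_mix_zero hc hθ hAe hk hX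
        · exact Zc_mix_two hc hθ hAe hk
      rw [hZ _ (mix_box hc hθ A) hZc, mul_zero]
    have hfil : ∑ A ∈ (Ee c θ).powerset.filter (fun A => (Cc c θ A).card = 1),
        (-1:ℝ)^A.card * ∑ i, u i (mix c θ A ∘ i.succAbove) = 0 := by
      rw [Finset.sum_filter_of_ne hterm]
      exact hid
    have hconst : ∀ A ∈ (Ee c θ).powerset.filter (fun A => (Cc c θ A).card = 1),
        (-1:ℝ)^A.card * ∑ i, u i (mix c θ A ∘ i.succAbove)
        = (-((-1:ℝ))^(Ec c θ).card) * (∑ i, u i (mix c θ A ∘ i.succAbove)) := by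
      intro A hA
      rw [Finset.mem_filter] at hA
      have hAe : A ⊆ Ee c θ := Finset.mem_powerset.mp hA.1
      rw [sign_lemma hc hAe, hA.2, pow_one]
      ring
    rw [Finset.sum_congr rfl hconst, ← Finset.mul_sum] at hfil
    have hne : (-((-1:ℝ))^(Ec c θ).card) ≠ 0 := by
      simp only [ne_eq, neg_eq_zero]
      exact pow_ne_zero _ (by norm_num)
    have hsum0 : ∑ A ∈ (Ee c θ).powerset.filter (fun A => (Cc c θ A).card = 1),
        (∑ i, u i (mix c θ A ∘ i.succAbove)) = 0 :=
      (mul_eq_zero.mp hfil).resolve_left hne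
    have hall : ∀ A ∈ (Ee c θ).powerset.filter (fun A => (Cc c θ A).card = 1),
        ∑ i, u i (mix c θ A ∘ i.succAbove) = 0 := by
      rw [← Finset.sum_eq_zero_iff_of_nonneg]
      · exact hsum0
      · intro A hA
        exact h0 _ (mix_box hc hθ A)
    have hCce : (Cc c θ ∅).card = (Ec c θ).card := by rw [Cc_empty hc]
    rcases Nat.lt_or_ge (Ec c θ).card 2 with h2 | h2
    · rcases Nat.eq_zero_or_pos (Ec c θ).card with h1 | h1
      · -- k₀ = 0 : Zc θ
        apply hZ θ hθ
        have hZc : Zc n c (mix c θ ∅) :=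
          Zc_mix_zero hc hθ (Finset.empty_subset _) (by omega) hX
        rwa [mix_empty] at hZc
      · -- k₀ = 1 : θ is one of the surviving terms
        have hmem : ∅ ∈ (Ee c θ).powerset.filter (fun A => (Cc c θ A).card = 1) := by
          rw [Finset.mem_filter]
          exact ⟨Finset.empty_mem_powerset _, by omega⟩
        have := hall ∅ hmem
        rwa [mix_empty] at this
    · -- k₀ ≥ 2 : Zc θ
      apply hZ θ hθ
      have hZc : Zc n c (mix c θ ∅) :=
        Zc_mix_two hc hθ (Finset.empty_subset _) (by omega)
      rwa [mix_empty] at hZc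

/-- The key lemma: any sum-nonnegative profile vanishing on `Zc` vanishes everywhere. -/
lemma key (hc : 0 < c) (u : Fin (n+1) → (Fin n → ℝ) → ℝ)
    (h0 : ∀ θ : Fin (n+1) → ℝ, box c θ → 0 ≤ ∑ i, u i (θ ∘ i.succAbove))
    (hZ : ∀ θ : Fin (n+1) → ℝ, box c θ → Zc n c θ → ∑ i, u i (θ ∘ i.succAbove) = 0) :
    ∀ θ : Fin (n+1) → ℝ, box c θ → ∑ i, u i (θ ∘ i.succAbove) = 0 := by
  suffices h : ∀ (M : ℕ) (θ : Fin (n+1) → ℝ), box c θ → (Ff c θ).card ≤ M →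
      ∑ i, u i (θ ∘ i.succAbove) = 0 by
    exact fun θ hθ => h (Ff c θ).card θ hθ le_rfl
  intro M
  induction M with
  | zero =>
    intro θ hθ hM
    exact key_step hc u h0 hZ θ hθ
      (fun θ' h1 h2 => absurd (h2.trans_le hM) (Nat.not_lt_zero _))
  | succ M ih =>
    intro θ hθ hM
    exact key_step hc u h0 hZ θ hθ
      (fun θ' h1 h2 => ih θ' h1 (by omega))

end PP18

theorem stmt_18 {n : ℕ} (hn : 1 ≤ n) (c : ℝ) (hc : 0 < c)
    (r : Fin (n+1) → (Fin n → ℝ) → ℝ)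
    -- r is pay-only
    (hpay : ∀ (i : Fin (n+1)) (θ : Fin (n+1) → ℝ), (∀ j, θ j ∈ Set.Icc 0 c) →
      r i (θ ∘ i.succAbove) ≤ ppVCGi (n+1) c i θ) :
    -- (1) ↔ (2)
    ((¬ ∃ r' : Fin (n+1) → (Fin n → ℝ) → ℝ,
        (∀ θ : Fin (n+1) → ℝ, (∀ i, θ i ∈ Set.Icc 0 c) →
          ∑ i : Fin (n+1), r' i (θ ∘ i.succAbove) ≤
            ∑ i : Fin (n+1), ppVCGi (n+1) c i θ) ∧
        (∀ (i : Fin (n+1)) (θ : Fin (n+1) → ℝ), (∀ j, θ j ∈ Set.Icc 0 c) →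
          r i (θ ∘ i.succAbove) ≤ r' i (θ ∘ i.succAbove)) ∧
        (∃ (i : Fin (n+1)) (θ : Fin (n+1) → ℝ), (∀ j, θ j ∈ Set.Icc 0 c) ∧
          r i (θ ∘ i.succAbove) < r' i (θ ∘ i.succAbove))) ↔
      (∀ (i : Fin (n+1)) (x : Fin n → ℝ),
        (∀ j, x j ∈ Set.Icc 0 c) → r i x = 0)) ∧
    -- (2) ↔ (3)
    ((∀ (i : Fin (n+1)) (x : Fin n → ℝ),
        (∀ j, x j ∈ Set.Icc 0 c) → r i x = 0) ↔
      (¬ ∃ r' : Fin (n+1) → (Fin n → ℝ) → ℝ,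
        (∀ θ : Fin (n+1) → ℝ, (∀ i, θ i ∈ Set.Icc 0 c) →
          ∑ i : Fin (n+1), r' i (θ ∘ i.succAbove) ≤
            ∑ i : Fin (n+1), ppVCGi (n+1) c i θ) ∧
        (∀ θ : Fin (n+1) → ℝ, (∀ i, θ i ∈ Set.Icc 0 c) →
          ∑ i : Fin (n+1), r i (θ ∘ i.succAbove) ≤
            ∑ i : Fin (n+1), r' i (θ ∘ i.succAbove)) ∧
        (∃ θ : Fin (n+1) → ℝ, (∀ i, θ i ∈ Set.Icc 0 c) ∧
          ∑ i : Fin (n+1), r i (θ ∘ i.succAbove) <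
            ∑ i : Fin (n+1), r' i (θ ∘ i.succAbove)))) := by
  -- pay-only forces r ≤ 0 on the box
  have hr0 : ∀ (i : Fin (n+1)) (x : Fin n → ℝ), (∀ j, x j ∈ Set.Icc 0 c) → r i x ≤ 0 := by
    intro i x hx
    obtain ⟨θ, hθ, hcomp, hZc⟩ := PP18.exists_ext hc i x hx
    have h := hpay i θ hθ
    rwa [hcomp, PP18.vcg_zero i θ hZc] at h
  -- (1) → (2)
  have h12 : (¬ ∃ r' : Fin (n+1) → (Fin n → ℝ) → ℝ,
        (∀ θ : Fin (n+1) → ℝ, (∀ i, θ i ∈ Set.Icc 0 c) →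
          ∑ i : Fin (n+1), r' i (θ ∘ i.succAbove) ≤
            ∑ i : Fin (n+1), ppVCGi (n+1) c i θ) ∧
        (∀ (i : Fin (n+1)) (θ : Fin (n+1) → ℝ), (∀ j, θ j ∈ Set.Icc 0 c) →
          r i (θ ∘ i.succAbove) ≤ r' i (θ ∘ i.succAbove)) ∧
        (∃ (i : Fin (n+1)) (θ : Fin (n+1) → ℝ), (∀ j, θ j ∈ Set.Icc 0 c) ∧
          r i (θ ∘ i.succAbove) < r' i (θ ∘ i.succAbove))) →
      (∀ (i : Fin (n+1)) (x : Fin n → ℝ), (∀ j, x j ∈ Set.Icc 0 c) → r i x = 0) := by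
    intro h1 i x hx
    by_contra hne
    apply h1
    refine ⟨fun _ _ => 0, ?_, ?_, ?_⟩
    · intro θ hθ
      simp only [Finset.sum_const_zero]
      exact Finset.sum_nonneg fun i' _ => PP18.vcg_nonneg i' θ
    · intro i' θ hθ
      exact hr0 i' _ (fun j => hθ _)
    · refine ⟨i, i.insertNth 0 x, ?_, ?_⟩
      · intro j
        by_cases hj : j = i
        · subst hj; simp only [Fin.insertNth_apply_same]; exact ⟨le_rfl, hc.le⟩
        · obtain ⟨k, rfl⟩ := Fin.exists_succAbove_eq hj
          simp only [Fin.insertNth_apply_succAbove]; exact hx k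
      · have hcomp : ((i.insertNth 0 x : Fin (n+1) → ℝ)) ∘ i.succAbove = x := by
          funext k; simp
        show r i (((i.insertNth 0 x : Fin (n+1) → ℝ)) ∘ i.succAbove) < 0
        rw [hcomp]
        exact lt_of_le_of_ne (hr0 i x hx) hne
  -- (2) → (3)
  have h23 : (∀ (i : Fin (n+1)) (x : Fin n → ℝ), (∀ j, x j ∈ Set.Icc 0 c) → r i x = 0) →
      (¬ ∃ r' : Fin (n+1) → (Fin n → ℝ) → ℝ,
        (∀ θ : Fin (n+1) → ℝ, (∀ i, θ i ∈ Set.Icc 0 c) →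
          ∑ i : Fin (n+1), r' i (θ ∘ i.succAbove) ≤
            ∑ i : Fin (n+1), ppVCGi (n+1) c i θ) ∧
        (∀ θ : Fin (n+1) → ℝ, (∀ i, θ i ∈ Set.Icc 0 c) →
          ∑ i : Fin (n+1), r i (θ ∘ i.succAbove) ≤
            ∑ i : Fin (n+1), r' i (θ ∘ i.succAbove)) ∧
        (∃ θ : Fin (n+1) → ℝ, (∀ i, θ i ∈ Set.Icc 0 c) ∧
          ∑ i : Fin (n+1), r i (θ ∘ i.succAbove) <
            ∑ i : Fin (n+1), r' i (θ ∘ i.succAbove))) := by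
    rintro h2 ⟨r', hnd, hdom, θs, hθs, hst⟩
    have hrz : ∀ θ : Fin (n+1) → ℝ, (∀ j, θ j ∈ Set.Icc 0 c) →
        ∑ i : Fin (n+1), r i (θ ∘ i.succAbove) = 0 := by
      intro θ hθ
      exact Finset.sum_eq_zero fun i _ => h2 i _ (fun j => hθ _)
    have h0 : ∀ θ : Fin (n+1) → ℝ, PP18.box c θ →
        0 ≤ ∑ i : Fin (n+1), r' i (θ ∘ i.succAbove) := by
      intro θ hθ
      have h := hdom θ hθ
      rwa [hrz θ hθ] at h
    have hZ0 : ∀ θ : Fin (n+1) → ℝ, PP18.box c θ → PP18.Zc n c θ →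
        ∑ i : Fin (n+1), r' i (θ ∘ i.succAbove) = 0 := by
      intro θ hθ hZc
      have hle := hnd θ hθ
      have hV : ∑ i : Fin (n+1), ppVCGi (n+1) c i θ = 0 :=
        Finset.sum_eq_zero fun i _ => PP18.vcg_zero i θ hZc
      rw [hV] at hle
      exact le_antisymm hle (h0 θ hθ)
    have hall := PP18.key hc r' h0 hZ0 θs hθs
    rw [hrz θs hθs, hall] at hst
    exact lt_irrefl 0 hst
  -- individual dominator gives collective dominator
  have h31' : (∃ r' : Fin (n+1) → (Fin n → ℝ) → ℝ,
        (∀ θ : Fin (n+1) → ℝ, (∀ i, θ i ∈ Set.Icc 0 c) →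
          ∑ i : Fin (n+1), r' i (θ ∘ i.succAbove) ≤
            ∑ i : Fin (n+1), ppVCGi (n+1) c i θ) ∧
        (∀ (i : Fin (n+1)) (θ : Fin (n+1) → ℝ), (∀ j, θ j ∈ Set.Icc 0 c) →
          r i (θ ∘ i.succAbove) ≤ r' i (θ ∘ i.succAbove)) ∧
        (∃ (i : Fin (n+1)) (θ : Fin (n+1) → ℝ), (∀ j, θ j ∈ Set.Icc 0 c) ∧
          r i (θ ∘ i.succAbove) < r' i (θ ∘ i.succAbove))) →
      (∃ r' : Fin (n+1) → (Fin n → ℝ) → ℝ,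
        (∀ θ : Fin (n+1) → ℝ, (∀ i, θ i ∈ Set.Icc 0 c) →
          ∑ i : Fin (n+1), r' i (θ ∘ i.succAbove) ≤
            ∑ i : Fin (n+1), ppVCGi (n+1) c i θ) ∧
        (∀ θ : Fin (n+1) → ℝ, (∀ i, θ i ∈ Set.Icc 0 c) →
          ∑ i : Fin (n+1), r i (θ ∘ i.succAbove) ≤
            ∑ i : Fin (n+1), r' i (θ ∘ i.succAbove)) ∧
        (∃ θ : Fin (n+1) → ℝ, (∀ i, θ i ∈ Set.Icc 0 c) ∧
          ∑ i : Fin (n+1), r i (θ ∘ i.succAbove) <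
            ∑ i : Fin (n+1), r' i (θ ∘ i.succAbove))) := by
    rintro ⟨r', hnd, hdom, i0, θ0, hθ0, hst⟩
    refine ⟨r', hnd, ?_, θ0, hθ0, ?_⟩
    · intro θ hθ
      exact Finset.sum_le_sum fun i _ => hdom i θ hθ
    · exact Finset.sum_lt_sum (fun i _ => hdom i θ0 hθ0) ⟨i0, Finset.mem_univ i0, hst⟩
  refine ⟨⟨h12, ?_⟩, ⟨h23, ?_⟩⟩
  · intro h2 h1ex
    exact h23 h2 (h31' h1ex)
  · intro h3 i x hx
    apply h12 (fun h1ex => h3 (h31' h1ex)) i x hx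
end

section
/- In the general public project problem (with participation cost shares c_1,…,c_n > 0 summing to c), the VCG mechanism individually dominates all other pay-only Groves mechanisms; equivalently, every pay-only Groves mechanism r' = (r'_1,…,r'_n) satisfies r'_i(θ_{-i}) ≤ 0 for all agents i and all θ_{-i} ∈ [0,c]^{n−1}. -/
/-!
STATEMENT 19: General public project problem: n+1 ≥ 2 agents, cost c > 0
with shares cs i > 0 summing to c, types in [0,c],
  VCG_i(θ) = max{0, Σ_{j≠i}(θ_j − cs_j)} − f(θ)·Σ_{j≠i}(θ_j − cs_j),
f(θ) = 1 iff Σ θ_i ≥ c. The VCG mechanism individually dominates all other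
pay-only Groves mechanisms; equivalently, every pay-only Groves mechanism r'
satisfies r'_i(θ_{-i}) ≤ 0 for all i and all θ_{-i} ∈ [0,c]^n — and hence,
if r' differs from the zero redistribution somewhere on the box, the VCG
mechanism (zero redistribution) individually dominates r'.
θ_{-i} is encoded as θ ∘ i.succAbove.
-/

/-- VCG payment of agent `i` in the public project with `N` agents, total
cost `c` and cost shares `cs`. -/
noncomputable def gppVCGi (N : ℕ) (c : ℝ) (cs : Fin N → ℝ)
    (i : Fin N) (θ : Fin N → ℝ) : ℝ :=
  max 0 (∑ j ∈ Finset.univ.erase i, (θ j - cs j)) -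
    (if c ≤ ∑ j, θ j then 1 else 0) * ∑ j ∈ Finset.univ.erase i, (θ j - cs j)

theorem stmt_19 {n : ℕ} (hn : 1 ≤ n) (c : ℝ) (hc : 0 < c)
    (cs : Fin (n+1) → ℝ) (hcs : ∀ i, 0 < cs i) (hsum : ∑ i, cs i = c)
    (r' : Fin (n+1) → (Fin n → ℝ) → ℝ)
    -- r' is pay-only
    (hpay : ∀ (i : Fin (n+1)) (θ : Fin (n+1) → ℝ), (∀ j, θ j ∈ Set.Icc 0 c) →
      r' i (θ ∘ i.succAbove) ≤ gppVCGi (n+1) c cs i θ) :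
    (∀ (i : Fin (n+1)) (x : Fin n → ℝ), (∀ j, x j ∈ Set.Icc 0 c) → r' i x ≤ 0) ∧
    -- consequently, if r' differs from VCG (zero redistribution) on the box,
    -- then the VCG mechanism individually dominates r'
    ((∃ (i : Fin (n+1)) (x : Fin n → ℝ), (∀ j, x j ∈ Set.Icc 0 c) ∧ r' i x ≠ 0) →
      ((∀ (i : Fin (n+1)) (θ : Fin (n+1) → ℝ), (∀ j, θ j ∈ Set.Icc 0 c) →
          r' i (θ ∘ i.succAbove) ≤ 0) ∧
        (∃ (i : Fin (n+1)) (θ : Fin (n+1) → ℝ), (∀ j, θ j ∈ Set.Icc 0 c) ∧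
          r' i (θ ∘ i.succAbove) < 0))) := by
  have key : ∀ (i : Fin (n+1)) (x : Fin n → ℝ), (∀ j, x j ∈ Set.Icc 0 c) → r' i x ≤ 0 := by
    intro i x hx
    set S : ℝ := ∑ k, (x k - cs (i.succAbove k)) with hSdef
    set t : ℝ := if 0 ≤ S then c else 0 with htdef
    have ht : t ∈ Set.Icc (0:ℝ) c := by
      rcases le_or_gt 0 S with h | h
      · simp [htdef, h, hc.le]
      · simp [htdef, not_le.2 h, hc.le]
    set θ : Fin (n+1) → ℝ := i.insertNth t x with hθ
    have hcomp : θ ∘ i.succAbove = x :=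
      Fin.insertNth_comp_succAbove i t x
    have hbox : ∀ j, θ j ∈ Set.Icc 0 c := by
      intro j
      rcases eq_or_ne j i with rfl | hji
      · simpa [hθ] using ht
      · obtain ⟨k, rfl⟩ := Fin.exists_succAbove_eq hji
        simpa [hθ] using hx k
    have hErase : ∑ j ∈ Finset.univ.erase i, (θ j - cs j) = S := by
      rw [Finset.sum_erase_eq_sub (Finset.mem_univ i),
        Fin.sum_univ_succAbove (fun j => θ j - cs j) i]
      simp [hθ, hSdef]
    have hsumθ : ∑ j, θ j = t + ∑ k, x k := by
      rw [Fin.sum_univ_succAbove θ i]; simp [hθ]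
    have hcsum : ∑ k, cs (i.succAbove k) = c - cs i := by
      have h := Fin.sum_univ_succAbove cs i
      rw [hsum] at h; linarith
    have h0 : gppVCGi (n+1) c cs i θ = 0 := by
      unfold gppVCGi
      rw [hErase]
      rcases le_or_gt 0 S with h | h
      · have ht' : t = c := by simp [htdef, h]
        have hle : c ≤ ∑ j, θ j := by
          have : 0 ≤ ∑ k, x k := Finset.sum_nonneg fun k _ => (hx k).1
          rw [hsumθ, ht']; linarith
        rw [if_pos hle, max_eq_right h]; ring
      · have ht' : t = 0 := by simp [htdef, not_le.2 h]
        have hxS : ∑ k, x k = S + (c - cs i) := by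
          rw [hSdef, Finset.sum_sub_distrib, hcsum]; ring
        have hlt : ¬ c ≤ ∑ j, θ j := by
          rw [hsumθ, ht', hxS]; push_neg; nlinarith [hcs i]
        rw [if_neg hlt, max_eq_left h.le]; ring
    have := hpay i θ hbox
    rw [hcomp, h0] at this
    exact this
  refine ⟨key, ?_⟩
  rintro ⟨i, x, hx, hne⟩
  refine ⟨fun i θ hθ => key i (θ ∘ i.succAbove) (fun j => hθ _), ?_⟩
  refine ⟨i, i.insertNth 0 x, ?_, ?_⟩
  · intro j
    rcases eq_or_ne j i with rfl | hji
    · simp [hc.le]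
    · obtain ⟨k, rfl⟩ := Fin.exists_succAbove_eq hji
      simpa using hx k
  · have hcomp : (i.insertNth 0 x : Fin (n+1) → ℝ) ∘ i.succAbove = x :=
      Fin.insertNth_comp_succAbove i 0 x
    rw [hcomp]
    exact lt_of_le_of_ne (key i x hx) hne
end
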